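/- arXiv:2103.07294 — 3 statements merged into one kernel-verified Lean document; each statement's English description precedes it below -/
import Mathlib

section
/- Let B be a nonempty binary tree with left subtree L and right subtree R (either possibly empty). Then the number of non-ambiguous trees of shape B satisfies |NAT(B)| = C(|LV(B)|, |LV_B(R)|) · C(|RV(B)|, |RV_B(L)|) · |NAT(L)| · |NAT(R)|, where C denotes the binomial coefficient, |LV_B(R)| is the number of left children of B lying in R, |RV_B(L)| is the number of right children of B lying in L, and by convention |NAT| of an empty tree equals 1. -/
/-- Binary trees: `leaf` is the empty tree, `node l r` is a vertex with
left subtree `l` and right subtree `r`. -/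
inductive BT : Type
  | leaf : BT
  | node : BT → BT → BT
  deriving DecidableEq

namespace BT

/-- The positions (vertices) of a binary tree, encoded as the lists of directions
(`false` = left, `true` = right) from the root. -/
def positions : BT → Finset (List Bool)
  | leaf => ∅
  | node l r =>
      insert [] ((l.positions.image (List.cons false)) ∪ (r.positions.image (List.cons true)))

/-- Positions of the left children of a binary tree. -/
def leftPos (B : BT) : Finset (List Bool) := B.positions.filter (fun p => p.getLast? = some false)

/-- Positions of the right children of a binary tree. -/
def rightPos (B : BT) : Finset (List Bool) := B.positions.filter (fun p => p.getLast? = some true)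

/-- The subtree rooted at a given position (the empty tree for invalid positions). -/
def subtreeAt : BT → List Bool → BT
  | t, [] => t
  | leaf, _ :: _ => leaf
  | node l r, b :: p => (if b then r else l).subtreeAt p

end BT

/-- A non-ambiguous tree of shape `B`: a labelling of the left (resp. right) children
of `B` by `0, …, |LV(B)|-1` (resp. `0, …, |RV(B)|-1`), bijectively, such that the label
of a strict ancestor is strictly greater than the label of a descendant (among left
children, resp. among right children).  A vertex `p` is a strict ancestor of `q`
exactly when `p` is a proper prefix of `q`. -/
structure NAT (B : BT) where
  labL : {p : List Bool // p ∈ B.leftPos} → Fin B.leftPos.card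
  labR : {p : List Bool // p ∈ B.rightPos} → Fin B.rightPos.card
  bijL : Function.Bijective labL
  bijR : Function.Bijective labR
  ancL : ∀ p q : {p : List Bool // p ∈ B.leftPos}, p.1 <+: q.1 → p.1 ≠ q.1 → labL q < labL p
  ancR : ∀ p q : {p : List Bool // p ∈ B.rightPos}, p.1 <+: q.1 → p.1 ≠ q.1 → labR q < labR p

instance (B : BT) : Finite (NAT B) := by
  have h : Function.Injective (fun T : NAT B => (T.labL, T.labR)) := by
    intro T₁ T₂ h
    cases T₁
    cases T₂
    simp only [Prod.mk.injEq] at h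
    obtain ⟨h1, h2⟩ := h
    subst h1
    subst h2
    rfl
  exact Finite.of_injective _ h

noncomputable instance (B : BT) : Fintype (NAT B) := Fintype.ofFinite _

namespace NATaux

structure Dec (S : Finset (List Bool)) where
  lab : {p : List Bool // p ∈ S} → Fin S.card
  bij : Function.Bijective lab
  anc : ∀ p q : {p : List Bool // p ∈ S}, p.1 <+: q.1 → p.1 ≠ q.1 → lab q < lab p

theorem Dec.ext {S : Finset (List Bool)} {f g : Dec S} (h : f.lab = g.lab) : f = g := by
  cases f; cases g; simpa using h

theorem bij_of_inj {S : Finset (List Bool)} {n : ℕ} (hn : S.card = n)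
    (f : {p : List Bool // p ∈ S} → Fin n) (hf : Function.Injective f) :
    Function.Bijective f := by
  rw [Fintype.bijective_iff_injective_and_card]
  exact ⟨hf, by simp [Fintype.card_coe, hn]⟩

theorem card_dec_empty : Nat.card (Dec (∅ : Finset (List Bool))) = 1 := by
  haveI h1 : IsEmpty {p : List Bool // p ∈ (∅ : Finset (List Bool))} :=
    ⟨fun p => Finset.notMem_empty _ p.2⟩
  haveI : Unique (Dec (∅ : Finset (List Bool))) :=
    { default := ⟨isEmptyElim, ⟨fun p => isEmptyElim p, fun y => by
        rw [Finset.card_empty] at y; exact y.elim0⟩, fun p => isEmptyElim p⟩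
      uniq := fun f => Dec.ext (funext fun p => isEmptyElim p) }
  exact Nat.card_unique

theorem card_dec_image_cons (b : Bool) (S : Finset (List Bool)) :
    Nat.card (Dec (S.image (List.cons b))) = Nat.card (Dec S) := by
  have hcard : (S.image (List.cons b)).card = S.card :=
    Finset.card_image_of_injective S List.cons_injective
  have tail_mem : ∀ q : List Bool, q ∈ S.image (List.cons b) → q.tail ∈ S := by
    intro q hq
    obtain ⟨p, hp, rfl⟩ := Finset.mem_image.1 hq
    simpa using hp
  have cons_tail : ∀ q : List Bool, q ∈ S.image (List.cons b) → b :: q.tail = q := by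
    intro q hq
    obtain ⟨p, hp, rfl⟩ := Finset.mem_image.1 hq
    rfl
  set G : Dec (S.image (List.cons b)) → Dec S := fun f =>
    { lab := fun p => Fin.cast hcard (f.lab ⟨b :: p.1, Finset.mem_image_of_mem _ p.2⟩)
      bij := bij_of_inj rfl _ (by
        intro p q h
        simp only [Fin.ext_iff, Fin.coe_cast] at h
        have := f.bij.1 (Fin.ext h)
        simp only [Subtype.mk.injEq, List.cons.injEq] at this
        exact Subtype.ext this.2)
      anc := by
        intro p q hpq hne
        simp only [Fin.lt_def, Fin.coe_cast]
        exact f.anc ⟨b :: p.1, _⟩ ⟨b :: q.1, _⟩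
          (List.cons_prefix_cons.2 ⟨rfl, hpq⟩)
          (fun h => hne (List.cons_injective h)) } with hG
  apply Nat.card_eq_of_bijective G
  constructor
  · intro f1 f2 h
    apply Dec.ext
    funext q
    have h' := congrFun (congrArg Dec.lab h) ⟨q.1.tail, tail_mem q.1 q.2⟩
    simp only [hG, Fin.ext_iff, Fin.coe_cast] at h'
    have hq : (⟨b :: q.1.tail, Finset.mem_image_of_mem _ (tail_mem q.1 q.2)⟩ :
        {p : List Bool // p ∈ S.image (List.cons b)}) = q := Subtype.ext (cons_tail q.1 q.2)
    rw [hq] at h'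
    exact Fin.ext h'
  · intro g
    refine ⟨{ lab := fun q => Fin.cast hcard.symm (g.lab ⟨q.1.tail, tail_mem q.1 q.2⟩)
              bij := bij_of_inj rfl _ (by
                intro p q h
                simp only [Fin.ext_iff, Fin.coe_cast] at h
                have := g.bij.1 (Fin.ext h)
                simp only [Subtype.mk.injEq] at this
                apply Subtype.ext
                rw [← cons_tail p.1 p.2, ← cons_tail q.1 q.2, this])
              anc := by
                intro p q hpq hne
                simp only [Fin.lt_def, Fin.coe_cast]
                have hp := cons_tail p.1 p.2
                have hq := cons_tail q.1 q.2
                rw [← hp, ← hq] at hpq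
                have hpq' := (List.cons_prefix_cons.1 hpq).2
                refine g.anc _ _ hpq' ?_
                intro h
                have h' : (p.1).tail = (q.1).tail := h
                exact hne (by rw [← hp, ← hq, h']) }, ?_⟩
    apply Dec.ext
    funext p
    simp only [hG, Fin.ext_iff, Fin.coe_cast, List.tail_cons]

theorem card_dec_insert_root (r : List Bool) (S : Finset (List Bool)) (hr : r ∉ S)
    (hpre : ∀ q ∈ S, r <+: q) :
    Nat.card (Dec (insert r S)) = Nat.card (Dec S) := by
  classical
  have hcard : (insert r S).card = S.card + 1 := Finset.card_insert_of_notMem hr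
  have hrmem : r ∈ insert r S := Finset.mem_insert_self r S
  have hlt : ∀ (f : Dec (insert r S)) (q : List Bool) (hq : q ∈ S),
      f.lab ⟨q, Finset.mem_insert_of_mem hq⟩ < f.lab ⟨r, hrmem⟩ := by
    intro f q hq
    exact f.anc ⟨r, hrmem⟩ ⟨q, _⟩ (hpre q hq) (fun h => hr ((show r = q from h) ▸ hq))
  have hlast : ∀ f : Dec (insert r S), (f.lab ⟨r, hrmem⟩ : ℕ) = S.card := by
    intro f
    obtain ⟨x, hx⟩ := f.bij.2 (Fin.cast hcard.symm (Fin.last S.card))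
    have hle : (f.lab x : ℕ) ≤ (f.lab ⟨r, hrmem⟩ : ℕ) := by
      rcases Finset.mem_insert.1 x.2 with h | h
      · have : x = ⟨r, hrmem⟩ := Subtype.ext h
        rw [this]
      · have hx2 := hlt f x.1 h
        have : (⟨x.1, Finset.mem_insert_of_mem h⟩ : {p : List Bool // p ∈ insert r S}) = x :=
          Subtype.ext rfl
        rw [this] at hx2
        exact le_of_lt hx2
    have h1 : (f.lab x : ℕ) = S.card := by rw [hx]; simp
    have h2 : (f.lab ⟨r, hrmem⟩ : ℕ) < S.card + 1 := by
      have := (f.lab ⟨r, hrmem⟩).2; omega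
    omega
  set G : Dec (insert r S) → Dec S := fun f =>
    { lab := fun p => ⟨(f.lab ⟨p.1, Finset.mem_insert_of_mem p.2⟩ : ℕ), by
        have := hlt f p.1 p.2; have := hlast f; omega⟩
      bij := bij_of_inj rfl _ (by
        intro p q h
        simp only [Fin.mk.injEq] at h
        have := f.bij.1 (Fin.ext h)
        simp only [Subtype.mk.injEq] at this
        exact Subtype.ext this)
      anc := by
        intro p q hpq hne
        simp only [Fin.lt_def]
        exact f.anc ⟨p.1, _⟩ ⟨q.1, _⟩ hpq hne } with hG
  apply Nat.card_eq_of_bijective G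
  constructor
  · intro f1 f2 h
    apply Dec.ext
    funext x
    rcases Finset.mem_insert.1 x.2 with hx | hx
    · have hx' : x = ⟨r, hrmem⟩ := Subtype.ext hx
      rw [hx']
      exact Fin.ext (by rw [hlast f1, hlast f2])
    · have h' := congrFun (congrArg Dec.lab h) ⟨x.1, hx⟩
      simp only [hG, Fin.mk.injEq] at h'
      have hxe : (⟨x.1, Finset.mem_insert_of_mem hx⟩ : {p : List Bool // p ∈ insert r S}) = x :=
        Subtype.ext rfl
      rw [hxe] at h'
      exact Fin.ext h'
  · intro g
    have hne_r : ∀ p : {p : List Bool // p ∈ insert r S}, p.1 ≠ r → p.1 ∈ S := by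
      intro p hp
      exact Finset.mem_of_mem_insert_of_ne p.2 hp
    refine ⟨{ lab := fun x => if h : x.1 = r then Fin.cast hcard.symm (Fin.last S.card)
                else Fin.cast hcard.symm (Fin.castSucc (g.lab ⟨x.1, hne_r x h⟩))
              bij := bij_of_inj rfl _ (by
                intro p q h
                by_cases hp : p.1 = r <;> by_cases hq : q.1 = r
                · exact Subtype.ext (hp.trans hq.symm)
                · simp only [dif_pos hp, dif_neg hq] at h
                  simp only [Fin.ext_iff, Fin.coe_cast, Fin.val_last, Fin.coe_castSucc] at h
                  have := (g.lab ⟨q.1, hne_r q hq⟩).2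
                  omega
                · simp only [dif_neg hp, dif_pos hq] at h
                  simp only [Fin.ext_iff, Fin.coe_cast, Fin.val_last, Fin.coe_castSucc] at h
                  have := (g.lab ⟨p.1, hne_r p hp⟩).2
                  omega
                · simp only [dif_neg hp, dif_neg hq] at h
                  simp only [Fin.ext_iff, Fin.coe_cast, Fin.coe_castSucc] at h
                  have := g.bij.1 (Fin.ext h)
                  simp only [Subtype.mk.injEq] at this
                  exact Subtype.ext this)
              anc := by
                intro p q hpq hne
                have hqr : q.1 ≠ r := by
                  intro h
                  have hp : p.1 ≠ r := fun h' => hne (h'.trans h.symm)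
                  have hpS := hne_r p hp
                  have h1 : p.1 <+: r := by
                    have h1' := hpq; rw [h] at h1'; exact h1'
                  have h2 : r <+: p.1 := hpre p.1 hpS
                  have : p.1 = r := h1.eq_of_length
                    (le_antisymm h1.length_le h2.length_le)
                  exact hp this
                simp only [dif_neg hqr]
                by_cases hp : p.1 = r
                · simp only [dif_pos hp]
                  simp only [Fin.lt_def, Fin.coe_cast, Fin.val_last, Fin.coe_castSucc]
                  exact (g.lab ⟨q.1, hne_r q hqr⟩).2
                · simp only [dif_neg hp]
                  simp only [Fin.lt_def, Fin.coe_cast, Fin.coe_castSucc]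
                  exact g.anc ⟨p.1, hne_r p hp⟩ ⟨q.1, hne_r q hqr⟩ hpq hne }, ?_⟩
    apply Dec.ext
    funext p
    have hpr : p.1 ≠ r := fun h => hr (h ▸ p.2)
    simp only [hG, Fin.ext_iff]
    rw [dif_neg hpr]
    simp

theorem card_dec_union (S T : Finset (List Bool))
    (hcross : ∀ p ∈ S, ∀ q ∈ T, ¬ p <+: q ∧ ¬ q <+: p) :
    Nat.card (Dec (S ∪ T)) =
      ((S ∪ T).card.choose S.card) * Nat.card (Dec S) * Nat.card (Dec T) := by
  classical
  have hdisj : Disjoint S T := by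
    rw [Finset.disjoint_left]
    intro a ha hb
    exact (hcross a ha a hb).1 (List.prefix_refl a)
  have hn : (S ∪ T).card = S.card + T.card := Finset.card_union_of_disjoint hdisj
  have memT : ∀ p : {p : List Bool // p ∈ S ∪ T}, p.1 ∉ S → p.1 ∈ T := by
    intro p hp
    rcases Finset.mem_union.1 p.2 with h | h
    · exact absurd h hp
    · exact h
  have hUc : ∀ U : Finset (Fin (S ∪ T).card), U.card = S.card → Uᶜ.card = T.card := by
    intro U hU
    rw [Finset.card_compl, Fintype.card_fin, hU]
    omega
  have hR : ((S ∪ T).card.choose S.card) * Nat.card (Dec S) * Nat.card (Dec T) =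
      Nat.card ({U : Finset (Fin (S ∪ T).card) // U.card = S.card} × Dec S × Dec T) := by
    have hsub : Nat.card {U : Finset (Fin (S ∪ T).card) // U.card = S.card} =
        (S ∪ T).card.choose S.card := by
      rw [Nat.card_eq_fintype_card, Fintype.card_finset_len, Fintype.card_fin]
    rw [Nat.card_prod, Nat.card_prod, hsub, mul_assoc]
  rw [hR]
  set F : ({U : Finset (Fin (S ∪ T).card) // U.card = S.card} × Dec S × Dec T) →
      Dec (S ∪ T) := fun x =>
    { lab := fun p =>
        if hp : p.1 ∈ S then ((x.1.1.orderIsoOfFin x.1.2) (x.2.1.lab ⟨p.1, hp⟩) : Fin _)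
        else ((x.1.1ᶜ.orderIsoOfFin (hUc x.1.1 x.1.2)) (x.2.2.lab ⟨p.1, memT p hp⟩) : Fin _)
      bij := bij_of_inj rfl _ (by
        intro p q h
        by_cases hp : p.1 ∈ S <;> by_cases hq : q.1 ∈ S
        · simp only [dif_pos hp, dif_pos hq] at h
          have h2 := (x.1.1.orderIsoOfFin x.1.2).injective (Subtype.ext h)
          have h3 := x.2.1.bij.1 h2
          exact Subtype.ext (Subtype.mk_eq_mk.1 h3)
        · exfalso
          simp only [dif_pos hp, dif_neg hq] at h
          have hm1 := ((x.1.1.orderIsoOfFin x.1.2) (x.2.1.lab ⟨p.1, hp⟩)).2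
          have hm2 := ((x.1.1ᶜ.orderIsoOfFin (hUc x.1.1 x.1.2)) (x.2.2.lab ⟨q.1, memT q hq⟩)).2
          rw [← h] at hm2
          exact (Finset.mem_compl.1 hm2) hm1
        · exfalso
          simp only [dif_neg hp, dif_pos hq] at h
          have hm1 := ((x.1.1.orderIsoOfFin x.1.2) (x.2.1.lab ⟨q.1, hq⟩)).2
          have hm2 := ((x.1.1ᶜ.orderIsoOfFin (hUc x.1.1 x.1.2)) (x.2.2.lab ⟨p.1, memT p hp⟩)).2
          rw [h] at hm2
          exact (Finset.mem_compl.1 hm2) hm1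
        · simp only [dif_neg hp, dif_neg hq] at h
          have h2 := (x.1.1ᶜ.orderIsoOfFin (hUc x.1.1 x.1.2)).injective (Subtype.ext h)
          have h3 := x.2.2.bij.1 h2
          exact Subtype.ext (Subtype.mk_eq_mk.1 h3))
      anc := by
        intro p q hpq hne
        by_cases hp : p.1 ∈ S <;> by_cases hq : q.1 ∈ S
        · simp only [dif_pos hp, dif_pos hq]
          exact Subtype.coe_lt_coe.2 ((OrderIso.lt_iff_lt _).2
            (x.2.1.anc ⟨p.1, hp⟩ ⟨q.1, hq⟩ hpq hne))
        · exact absurd hpq (hcross p.1 hp q.1 (memT q hq)).1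
        · exact absurd hpq (hcross q.1 hq p.1 (memT p hp)).2
        · simp only [dif_neg hp, dif_neg hq]
          exact Subtype.coe_lt_coe.2 ((OrderIso.lt_iff_lt _).2
            (x.2.2.anc ⟨p.1, memT p hp⟩ ⟨q.1, memT q hq⟩ hpq hne)) } with hF
  symm
  apply Nat.card_eq_of_bijective F
  have key : ∀ (U : Finset (Fin (S ∪ T).card)) (hU : U.card = S.card) (g : Dec S) (h : Dec T)
      (u : Fin (S ∪ T).card), u ∈ U ↔ ∃ a, ∃ ha : a ∈ S,
        (F (⟨U, hU⟩, g, h)).lab ⟨a, Finset.mem_union_left T ha⟩ = u := by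
    intro U hU g h u
    constructor
    · intro hu
      obtain ⟨a, ha⟩ := g.bij.2 ((U.orderIsoOfFin hU).symm ⟨u, hu⟩)
      refine ⟨a.1, a.2, ?_⟩
      simp only [hF, dif_pos a.2]
      have : (⟨a.1, a.2⟩ : {p : List Bool // p ∈ S}) = a := Subtype.ext rfl
      rw [this, ha]
      simp
    · rintro ⟨a, ha, hlab⟩
      rw [← hlab]
      simp only [hF, dif_pos ha]
      exact ((U.orderIsoOfFin hU) (g.lab ⟨a, ha⟩)).2
  constructor
  · rintro ⟨⟨U1, hU1⟩, g1, h1⟩ ⟨⟨U2, hU2⟩, g2, h2⟩ hxy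
    have hUeq : U1 = U2 := by
      ext u
      rw [key U1 hU1 g1 h1 u, key U2 hU2 g2 h2 u, hxy]
    subst hUeq
    have hg : g1 = g2 := by
      apply Dec.ext
      funext p
      have h' := congrFun (congrArg Dec.lab hxy) ⟨p.1, Finset.mem_union_left T p.2⟩
      simp only [hF, dif_pos p.2] at h'
      exact (U1.orderIsoOfFin hU1).injective (Subtype.ext h')
    have hh : h1 = h2 := by
      apply Dec.ext
      funext p
      have hpnS : p.1 ∉ S := fun hs => Finset.disjoint_left.1 hdisj hs p.2
      have h' := congrFun (congrArg Dec.lab hxy) ⟨p.1, Finset.mem_union_right S p.2⟩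
      simp only [hF, dif_neg hpnS] at h'
      exact (U1ᶜ.orderIsoOfFin (hUc U1 hU1)).injective (Subtype.ext h')
    subst hg; subst hh
    rfl
  · intro f
    have hinj : Function.Injective
        (fun p : {p : List Bool // p ∈ S} => f.lab ⟨p.1, Finset.mem_union_left T p.2⟩) := by
      intro p q h
      have h2 := f.bij.1 h
      exact Subtype.ext (Subtype.mk_eq_mk.1 h2)
    set U : Finset (Fin (S ∪ T).card) :=
      Finset.univ.image (fun p : {p : List Bool // p ∈ S} =>
        f.lab ⟨p.1, Finset.mem_union_left T p.2⟩) with hUdef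
    have hU : U.card = S.card := by
      rw [hUdef, Finset.card_image_of_injective _ hinj, Finset.card_univ, Fintype.card_coe]
    have hmemU : ∀ (a : List Bool) (ha : a ∈ S),
        f.lab ⟨a, Finset.mem_union_left T ha⟩ ∈ U := by
      intro a ha
      rw [hUdef]
      exact Finset.mem_image_of_mem _ (Finset.mem_univ (⟨a, ha⟩ : {p : List Bool // p ∈ S}))
    have hmemUc : ∀ (a : List Bool) (ha : a ∈ T),
        f.lab ⟨a, Finset.mem_union_right S ha⟩ ∈ Uᶜ := by
      intro a ha
      rw [Finset.mem_compl, hUdef]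
      intro hmem
      obtain ⟨p, _, hp⟩ := Finset.mem_image.1 hmem
      have h2 := f.bij.1 hp
      have ha' : a ∈ S := (Subtype.mk_eq_mk.1 h2) ▸ p.2
      exact Finset.disjoint_left.1 hdisj ha' ha
    refine ⟨⟨⟨U, hU⟩,
      { lab := fun p => (U.orderIsoOfFin hU).symm
          ⟨f.lab ⟨p.1, Finset.mem_union_left T p.2⟩, hmemU p.1 p.2⟩
        bij := bij_of_inj rfl _ (by
          intro p q h
          have h2 := (U.orderIsoOfFin hU).symm.injective h
          have h3 := f.bij.1 (Subtype.mk_eq_mk.1 h2)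
          exact Subtype.ext (Subtype.mk_eq_mk.1 h3))
        anc := by
          intro p q hpq hne
          have h2 := f.anc ⟨p.1, Finset.mem_union_left T p.2⟩
            ⟨q.1, Finset.mem_union_left T q.2⟩ hpq hne
          exact (OrderIso.lt_iff_lt _).2 (Subtype.mk_lt_mk.2 h2) },
      { lab := fun p => (Uᶜ.orderIsoOfFin (hUc U hU)).symm
          ⟨f.lab ⟨p.1, Finset.mem_union_right S p.2⟩, hmemUc p.1 p.2⟩
        bij := bij_of_inj rfl _ (by
          intro p q h
          have h2 := (Uᶜ.orderIsoOfFin (hUc U hU)).symm.injective h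
          have h3 := f.bij.1 (Subtype.mk_eq_mk.1 h2)
          exact Subtype.ext (Subtype.mk_eq_mk.1 h3))
        anc := by
          intro p q hpq hne
          have h2 := f.anc ⟨p.1, Finset.mem_union_right S p.2⟩
            ⟨q.1, Finset.mem_union_right S q.2⟩ hpq hne
          exact (OrderIso.lt_iff_lt _).2 (Subtype.mk_lt_mk.2 h2) }⟩, ?_⟩
    apply Dec.ext
    funext p
    by_cases hp : p.1 ∈ S
    · simp only [hF, dif_pos hp, OrderIso.apply_symm_apply]
    · simp only [hF, dif_neg hp, OrderIso.apply_symm_apply]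

theorem getLast_cons_iff (b c : Bool) (q : List Bool) :
    (b :: q).getLast? = some c ↔ (q = [] ∧ b = c) ∨ q.getLast? = some c := by
  cases q <;> simp [List.getLast?_cons_cons, eq_comm]

theorem leftPos_node (L R : BT) :
    (BT.node L R).leftPos =
      (L.positions.filter (fun q => q = [] ∨ q.getLast? = some false)).image (List.cons false) ∪
        R.leftPos.image (List.cons true) := by
  classical
  simp only [BT.leftPos, BT.positions, Finset.filter_insert]
  rw [if_neg (by simp), Finset.filter_union, Finset.filter_image, Finset.filter_image]
  congr 1
  · congr 1
    apply Finset.filter_congr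
    intro a _
    rw [getLast_cons_iff]
    simp
  · congr 1
    apply Finset.filter_congr
    intro a _
    rw [getLast_cons_iff]
    simp

theorem rightPos_node (L R : BT) :
    (BT.node L R).rightPos =
      L.rightPos.image (List.cons false) ∪
        (R.positions.filter (fun q => q = [] ∨ q.getLast? = some true)).image (List.cons true) := by
  classical
  simp only [BT.rightPos, BT.positions, Finset.filter_insert]
  rw [if_neg (by simp), Finset.filter_union, Finset.filter_image, Finset.filter_image]
  congr 1
  · congr 1
    apply Finset.filter_congr
    intro a _
    rw [getLast_cons_iff]
    simp
  · congr 1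
    apply Finset.filter_congr
    intro a _
    rw [getLast_cons_iff]
    simp

theorem filter_root (L : BT) (c : Bool) :
    L.positions.filter (fun q => q = [] ∨ q.getLast? = some c) =
      if L = BT.leaf then ∅
      else insert [] (L.positions.filter (fun q => q.getLast? = some c)) := by
  cases L with
  | leaf => simp [BT.positions]
  | node l r =>
    rw [if_neg (by simp)]
    ext x
    simp only [Finset.mem_filter, Finset.mem_insert]
    constructor
    · rintro ⟨hx, h | h⟩
      · exact Or.inl h
      · exact Or.inr ⟨hx, h⟩
    · rintro (rfl | ⟨hx, h⟩)
      · exact ⟨by simp [BT.positions], Or.inl rfl⟩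
      · exact ⟨hx, Or.inr h⟩

theorem card_dec_rootfilter (X : BT) (c : Bool) :
    Nat.card (Dec (X.positions.filter (fun q => q = [] ∨ q.getLast? = some c))) =
      Nat.card (Dec (X.positions.filter (fun q => q.getLast? = some c))) := by
  rw [filter_root X c]
  by_cases h : X = BT.leaf
  · rw [if_pos h]
    subst h
    have h2 : (BT.leaf.positions.filter (fun q => q.getLast? = some c)) = ∅ := by
      simp [BT.positions]
    rw [h2, card_dec_empty]
  · rw [if_neg h]
    apply card_dec_insert_root
    · simp
    · intro q _
      exact List.nil_prefix

theorem card_dec_leftPos_node (L R : BT) :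
    Nat.card (Dec (BT.node L R).leftPos) =
      ((BT.node L R).leftPos.card.choose R.leftPos.card) *
        (Nat.card (Dec L.leftPos) * Nat.card (Dec R.leftPos)) := by
  classical
  rw [leftPos_node]
  set A := (L.positions.filter (fun q => q = [] ∨ q.getLast? = some false)).image
    (List.cons false) with hA
  set B := R.leftPos.image (List.cons true) with hB
  have hcross : ∀ p ∈ A, ∀ q ∈ B, ¬ p <+: q ∧ ¬ q <+: p := by
    intro p hp q hq
    obtain ⟨p', _, rfl⟩ := Finset.mem_image.1 hp
    obtain ⟨q', _, rfl⟩ := Finset.mem_image.1 hq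
    constructor
    · intro h; simpa using (List.cons_prefix_cons.1 h).1
    · intro h; simpa using (List.cons_prefix_cons.1 h).1
  rw [card_dec_union A B hcross]
  have hdisj : Disjoint A B := by
    rw [Finset.disjoint_left]
    intro a ha hb
    exact (hcross a ha a hb).1 (List.prefix_refl a)
  have hBc : B.card = R.leftPos.card := Finset.card_image_of_injective _ List.cons_injective
  have hchoose : (A ∪ B).card.choose A.card = (A ∪ B).card.choose B.card := by
    rw [Finset.card_union_of_disjoint hdisj]
    have h3 := Nat.choose_symm (show B.card ≤ A.card + B.card by omega)
    rw [Nat.add_sub_cancel] at h3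
    exact h3
  rw [hchoose, hBc]
  have e1 : Nat.card (Dec A) = Nat.card (Dec L.leftPos) := by
    rw [hA, card_dec_image_cons, card_dec_rootfilter]
    rfl
  have e2 : Nat.card (Dec B) = Nat.card (Dec R.leftPos) := by
    rw [hB, card_dec_image_cons]
  rw [e1, e2]
  ring

theorem card_dec_rightPos_node (L R : BT) :
    Nat.card (Dec (BT.node L R).rightPos) =
      ((BT.node L R).rightPos.card.choose L.rightPos.card) *
        (Nat.card (Dec L.rightPos) * Nat.card (Dec R.rightPos)) := by
  classical
  rw [rightPos_node]
  set A := L.rightPos.image (List.cons false) with hA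
  set B := (R.positions.filter (fun q => q = [] ∨ q.getLast? = some true)).image
    (List.cons true) with hB
  have hcross : ∀ p ∈ A, ∀ q ∈ B, ¬ p <+: q ∧ ¬ q <+: p := by
    intro p hp q hq
    obtain ⟨p', _, rfl⟩ := Finset.mem_image.1 hp
    obtain ⟨q', _, rfl⟩ := Finset.mem_image.1 hq
    constructor
    · intro h; simpa using (List.cons_prefix_cons.1 h).1
    · intro h; simpa using (List.cons_prefix_cons.1 h).1
  rw [card_dec_union A B hcross]
  have hAc : A.card = L.rightPos.card := Finset.card_image_of_injective _ List.cons_injective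
  rw [hAc]
  have e1 : Nat.card (Dec A) = Nat.card (Dec L.rightPos) := by
    rw [hA, card_dec_image_cons]
  have e2 : Nat.card (Dec B) = Nat.card (Dec R.rightPos) := by
    rw [hB, card_dec_image_cons, card_dec_rootfilter]
    rfl
  rw [e1, e2]
  ring

theorem card_nat (B : BT) :
    Nat.card (NAT B) = Nat.card (Dec B.leftPos) * Nat.card (Dec B.rightPos) := by
  rw [← Nat.card_prod]
  exact Nat.card_congr ⟨fun T => (⟨T.labL, T.bijL, T.ancL⟩, ⟨T.labR, T.bijR, T.ancR⟩),
    fun x => ⟨x.1.lab, x.2.lab, x.1.bij, x.2.bij, x.1.anc, x.2.anc⟩,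
    fun T => rfl, fun x => rfl⟩

end NATaux


/-- For a nonempty binary tree `B = node L R`, the number of
non-ambiguous trees of shape `B` is
`C(|LV(B)|, |LV_B(R)|) * C(|RV(B)|, |RV_B(L)|) * |NAT(L)| * |NAT(R)|`,
where the left children of `B` lying in `R` are in bijection with the left children
of `R` (the root of `R` being a right child of `B`), and symmetrically.
The empty tree has exactly one non-ambiguous labelling. -/
theorem stmt0 (L R : BT) :
    Nat.card (NAT (BT.node L R)) =
      Nat.choose (BT.node L R).leftPos.card R.leftPos.card *
        Nat.choose (BT.node L R).rightPos.card L.rightPos.card *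
        Nat.card (NAT L) * Nat.card (NAT R) := by
  rw [NATaux.card_nat, NATaux.card_dec_leftPos_node, NATaux.card_dec_rightPos_node,
    NATaux.card_nat L, NATaux.card_nat R]
  ring
end

section
/- Hook-length formula for non-ambiguous trees: for any nonempty binary tree B, the number of non-ambiguous trees of shape B equals |LV(B)|! · |RV(B)|! divided by the product, over all left children U of B, of EL(U), times the product, over all right children U of B, of ER(U). -/
section Aux
open Finset

namespace NAThook

variable (S : Finset (List Bool))

/-- Hook of `p` in `S`: number of elements of `S` having `p` as prefix. -/
def hook (p : List Bool) : ℕ := (S.filter (fun q => p <+: q)).card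

/-- Decreasing bijective labellings of `S`. -/
def Dec : Type :=
  {f : {p : List Bool // p ∈ S} → Fin S.card //
    Function.Bijective f ∧
      ∀ p q : {p : List Bool // p ∈ S}, p.1 <+: q.1 → p.1 ≠ q.1 → f q < f p}

instance : Finite (Dec S) := by
  unfold Dec; infer_instance

noncomputable instance : Fintype (Dec S) := Fintype.ofFinite _

/-- Roots: elements of `S` with no strict prefix in `S`. -/
def roots : Finset (List Bool) := S.filter (fun p => ∀ q ∈ S, q <+: p → q = p)

lemma mem_of_mem_roots {r : List Bool} (h : r ∈ roots S) : r ∈ S :=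
  (Finset.mem_filter.1 h).1

lemma roots_prop {r : List Bool} (h : r ∈ roots S) :
    ∀ q ∈ S, q <+: r → q = r := (Finset.mem_filter.1 h).2

variable {S}

def theM (h : S.Nonempty) : Fin S.card :=
  ⟨S.card - 1, by have := Finset.card_pos.2 h; omega⟩

noncomputable def rootOfS (h : S.Nonempty) (F : Dec S) : {p : List Bool // p ∈ S} :=
  (Equiv.ofBijective F.1 F.2.1).symm (theM h)

lemma apply_rootOfS (h : S.Nonempty) (F : Dec S) : F.1 (rootOfS h F) = theM h :=
  (Equiv.ofBijective F.1 F.2.1).apply_symm_apply _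

lemma eq_rootOfS (h : S.Nonempty) (F : Dec S) {q : {p : List Bool // p ∈ S}}
    (hq : F.1 q = theM h) : q = rootOfS h F :=
  F.2.1.1 (by rw [hq, apply_rootOfS])

lemma rootOfS_mem_roots (h : S.Nonempty) (F : Dec S) : (rootOfS h F).1 ∈ roots S := by
  refine Finset.mem_filter.2 ⟨(rootOfS h F).2, fun q hq hpre => ?_⟩
  by_contra hne
  have := F.2.2 ⟨q, hq⟩ (rootOfS h F) hpre hne
  rw [apply_rootOfS] at this
  have h1 : (theM h).1 = S.card - 1 := rfl
  have h2 := (F.1 ⟨q, hq⟩).2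
  omega

variable {S : Finset (List Bool)}

noncomputable def restr (h : S.Nonempty) (r : List Bool) (F : Dec S)
    (hF : (rootOfS h F).1 = r) : Dec (S.erase r) := by
  have hrS : r ∈ S := hF ▸ (rootOfS h F).2
  have hcard : (S.erase r).card = S.card - 1 := Finset.card_erase_of_mem hrS
  have hne : ∀ p : {p : List Bool // p ∈ S.erase r},
      (F.1 ⟨p.1, Finset.mem_of_mem_erase p.2⟩).1 < S.card - 1 := by
    intro p
    have hpr : p.1 ≠ r := (Finset.mem_erase.1 p.2).1
    have hnM : F.1 ⟨p.1, Finset.mem_of_mem_erase p.2⟩ ≠ theM h := by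
      intro hEq
      exact hpr (congrArg Subtype.val (eq_rootOfS h F hEq) |>.trans hF)
    have h2 := (F.1 ⟨p.1, Finset.mem_of_mem_erase p.2⟩).2
    have h3 : (F.1 ⟨p.1, Finset.mem_of_mem_erase p.2⟩).1 ≠ S.card - 1 := by
      intro hv; exact hnM (Fin.ext hv)
    omega
  refine ⟨fun p => ⟨(F.1 ⟨p.1, Finset.mem_of_mem_erase p.2⟩).1, by rw [hcard]; exact hne p⟩,
    ⟨?_, ?_⟩, ?_⟩
  · -- injective
    intro p q hpq
    dsimp only at hpq
    simp only [Fin.mk.injEq] at hpq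
    have h5 := F.2.1.1 (Fin.ext hpq)
    simp only [Subtype.mk.injEq] at h5
    exact Subtype.ext h5
  · -- surjective
    intro k
    have hk : k.1 < S.card - 1 := hcard ▸ k.2
    obtain ⟨q, hq⟩ := F.2.1.2 ⟨k.1, by omega⟩
    have hqr : q.1 ≠ r := by
      intro hEq
      have : q = rootOfS h F := Subtype.ext (hEq.trans hF.symm)
      rw [this, apply_rootOfS] at hq
      have : S.card - 1 = k.1 := congrArg Fin.val hq
      omega
    refine ⟨⟨q.1, Finset.mem_erase.2 ⟨hqr, q.2⟩⟩, ?_⟩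
    apply Fin.ext
    show (F.1 ⟨q.1, _⟩).1 = k.1
    have : (⟨q.1, Finset.mem_of_mem_erase (Finset.mem_erase.2 ⟨hqr, q.2⟩)⟩
        : {p : List Bool // p ∈ S}) = q := Subtype.ext rfl
    rw [this, hq]
  · -- decreasing
    intro p q hpre hneq
    have := F.2.2 ⟨p.1, Finset.mem_of_mem_erase p.2⟩ ⟨q.1, Finset.mem_of_mem_erase q.2⟩
      hpre hneq
    exact this

noncomputable def extend (h : S.Nonempty) (r : List Bool) (hr : r ∈ roots S)
    (G : Dec (S.erase r)) : Dec S := by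
  have hrS : r ∈ S := mem_of_mem_roots S hr
  have hcard : (S.erase r).card = S.card - 1 := Finset.card_erase_of_mem hrS
  have hpos : 0 < S.card := Finset.card_pos.2 h
  refine ⟨fun p => if hpr : p.1 = r then theM h
      else ⟨(G.1 ⟨p.1, Finset.mem_erase.2 ⟨hpr, p.2⟩⟩).1, by
        have := (G.1 ⟨p.1, Finset.mem_erase.2 ⟨hpr, p.2⟩⟩).2; omega⟩,
    ⟨?_, ?_⟩, ?_⟩
  · -- injective
    intro p q hpq
    dsimp only at hpq
    by_cases hp : p.1 = r <;> by_cases hq : q.1 = r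
    · exact Subtype.ext (hp.trans hq.symm)
    · rw [dif_pos hp, dif_neg hq] at hpq
      have hv : S.card - 1 = (G.1 ⟨q.1, _⟩).1 := congrArg Fin.val hpq
      have := (G.1 ⟨q.1, Finset.mem_erase.2 ⟨hq, q.2⟩⟩).2
      omega
    · rw [dif_neg hp, dif_pos hq] at hpq
      have hv : (G.1 ⟨p.1, _⟩).1 = S.card - 1 := congrArg Fin.val hpq
      have := (G.1 ⟨p.1, Finset.mem_erase.2 ⟨hp, p.2⟩⟩).2
      omega
    · rw [dif_neg hp, dif_neg hq] at hpq
      simp only [Fin.mk.injEq] at hpq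
      have h5 := G.2.1.1 (Fin.ext hpq)
      simp only [Subtype.mk.injEq] at h5
      exact Subtype.ext h5
  · -- surjective
    intro k
    by_cases hk : k.1 = S.card - 1
    · exact ⟨⟨r, hrS⟩, by dsimp only; rw [dif_pos rfl]; exact Fin.ext hk.symm⟩
    · have hk2 : k.1 < S.card - 1 := by have := k.2; omega
      obtain ⟨q, hq⟩ := G.2.1.2 ⟨k.1, by omega⟩
      have hqr : q.1 ≠ r := (Finset.mem_erase.1 q.2).1
      refine ⟨⟨q.1, Finset.mem_of_mem_erase q.2⟩, ?_⟩
      dsimp only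
      rw [dif_neg (show (⟨q.1, Finset.mem_of_mem_erase q.2⟩ : {p : List Bool // p ∈ S}).1 ≠ r
        from hqr)]
      apply Fin.ext
      show (G.1 ⟨q.1, _⟩).1 = k.1
      have heq : (⟨q.1, Finset.mem_erase.2 ⟨hqr, Finset.mem_of_mem_erase q.2⟩⟩
          : {p : List Bool // p ∈ S.erase r}) = q := Subtype.ext rfl
      rw [heq, hq]
  · -- decreasing
    intro p q hpre hneq
    dsimp only
    by_cases hq : q.1 = r
    · exact absurd ((roots_prop S hr) p.1 p.2 (hq ▸ hpre)) (hq ▸ hneq)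
    · by_cases hp : p.1 = r
      · rw [dif_pos hp, dif_neg hq]
        have h7 := (G.1 ⟨q.1, Finset.mem_erase.2 ⟨hq, q.2⟩⟩).2
        rw [Fin.lt_def]
        show (G.1 ⟨q.1, Finset.mem_erase.2 ⟨hq, q.2⟩⟩).1 < S.card - 1
        omega
      · rw [dif_neg hp, dif_neg hq]
        have := G.2.2 ⟨p.1, Finset.mem_erase.2 ⟨hp, p.2⟩⟩ ⟨q.1, Finset.mem_erase.2 ⟨hq, q.2⟩⟩
          hpre hneq
        exact this

variable {S : Finset (List Bool)}

lemma rootOfS_extend (h : S.Nonempty) (r : List Bool) (hr : r ∈ roots S)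
    (G : Dec (S.erase r)) : (rootOfS h (extend h r hr G)).1 = r := by
  have happ : (extend h r hr G).1 ⟨r, mem_of_mem_roots S hr⟩ = theM h := by
    show (if hpr : r = r then theM h else _) = theM h
    rw [dif_pos rfl]
  have := eq_rootOfS h (extend h r hr G) happ
  exact (congrArg Subtype.val this).symm

lemma restr_extend (h : S.Nonempty) (r : List Bool) (hr : r ∈ roots S)
    (G : Dec (S.erase r)) :
    restr h r (extend h r hr G) (rootOfS_extend h r hr G) = G := by
  apply Subtype.ext
  funext p
  apply Fin.ext
  show ((extend h r hr G).1 ⟨p.1, Finset.mem_of_mem_erase p.2⟩).1 = (G.1 p).1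
  have hpr : p.1 ≠ r := (Finset.mem_erase.1 p.2).1
  show (if hx : p.1 = r then theM h else
      (⟨(G.1 ⟨p.1, Finset.mem_erase.2 ⟨hx, Finset.mem_of_mem_erase p.2⟩⟩).1, _⟩ : Fin S.card)).1
    = (G.1 p).1
  rw [dif_neg hpr]

lemma restr_injective (h : S.Nonempty) (r : List Bool)
    (F₁ F₂ : Dec S) (h₁ : (rootOfS h F₁).1 = r) (h₂ : (rootOfS h F₂).1 = r)
    (he : restr h r F₁ h₁ = restr h r F₂ h₂) : F₁ = F₂ := by
  apply Subtype.ext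
  funext p
  by_cases hp : p.1 = r
  · have e1 : p = rootOfS h F₁ := Subtype.ext (hp.trans h₁.symm)
    have e2 : p = rootOfS h F₂ := Subtype.ext (hp.trans h₂.symm)
    have a1 : F₁.1 p = theM h := by rw [e1]; exact apply_rootOfS h F₁
    have a2 : F₂.1 p = theM h := by rw [e2]; exact apply_rootOfS h F₂
    rw [a1, a2]
  · have hpe : p.1 ∈ S.erase r := Finset.mem_erase.2 ⟨hp, p.2⟩
    have := congrFun (congrArg Subtype.val he) ⟨p.1, hpe⟩
    have hv : ((restr h r F₁ h₁).1 ⟨p.1, hpe⟩).1 = ((restr h r F₂ h₂).1 ⟨p.1, hpe⟩).1 :=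
      congrArg Fin.val this
    have hv1 : ((restr h r F₁ h₁).1 ⟨p.1, hpe⟩).1 = (F₁.1 ⟨p.1, Finset.mem_of_mem_erase hpe⟩).1 :=
      rfl
    have hv2 : ((restr h r F₂ h₂).1 ⟨p.1, hpe⟩).1 = (F₂.1 ⟨p.1, Finset.mem_of_mem_erase hpe⟩).1 :=
      rfl
    have heq : (⟨p.1, Finset.mem_of_mem_erase hpe⟩ : {x : List Bool // x ∈ S}) = p :=
      Subtype.ext rfl
    rw [heq] at hv1 hv2
    exact Fin.ext (hv1 ▸ hv2 ▸ hv)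

lemma card_dec_eq_sum (h : S.Nonempty) :
    Nat.card (Dec S) = ∑ r ∈ roots S, Nat.card (Dec (S.erase r)) := by
  classical
  simp only [Nat.card_eq_fintype_card, ← Finset.card_univ]
  rw [Finset.card_eq_sum_card_fiberwise
    (f := fun F : Dec S => (rootOfS h F).1) (t := roots S)
    (fun F _ => rootOfS_mem_roots h F)]
  refine Finset.sum_congr rfl (fun r hr => ?_)
  refine Finset.card_bij
    (fun F hF => restr h r F (by simpa using (Finset.mem_filter.1 hF).2)) ?_ ?_ ?_
  · intro F hF; exact Finset.mem_univ _
  · intro F₁ h₁ F₂ h₂ he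
    exact restr_injective h r F₁ F₂ _ _ he
  · intro G _
    refine ⟨extend h r hr G, ?_, restr_extend h r hr G⟩
    exact Finset.mem_filter.2 ⟨Finset.mem_univ _, rootOfS_extend h r hr G⟩

variable {S : Finset (List Bool)}

lemma exists_root_prefix : ∀ p ∈ S, ∃ r ∈ roots S, r <+: p := by
  classical
  have key : ∀ n : ℕ, ∀ p ∈ S, p.length ≤ n → ∃ r ∈ roots S, r <+: p := by
    intro n
    induction n with
    | zero =>
      intro p hp hlen
      by_cases hroot : ∀ q ∈ S, q <+: p → q = p
      · exact ⟨p, Finset.mem_filter.2 ⟨hp, hroot⟩, List.prefix_refl p⟩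
      · push_neg at hroot
        obtain ⟨q, hq, hqpre, hqne⟩ := hroot
        have h1 := List.IsPrefix.length_le hqpre
        have h2 : q.length = p.length := by omega
        exact absurd (List.IsPrefix.eq_of_length hqpre h2) hqne
    | succ n ihn =>
      intro p hp hlen
      by_cases hroot : ∀ q ∈ S, q <+: p → q = p
      · exact ⟨p, Finset.mem_filter.2 ⟨hp, hroot⟩, List.prefix_refl p⟩
      · push_neg at hroot
        obtain ⟨q, hq, hqpre, hqne⟩ := hroot
        have hlt : q.length < p.length := lt_of_le_of_ne hqpre.length_le
          (fun h' => hqne (hqpre.eq_of_length h'))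
        obtain ⟨r, hr, hrpre⟩ := ihn q hq (by omega)
        exact ⟨r, hr, hrpre.trans hqpre⟩
  exact fun p hp => key p.length p hp le_rfl

lemma roots_disjoint {r₁ r₂ : List Bool} (h₁ : r₁ ∈ roots S) (h₂ : r₂ ∈ roots S)
    {p : List Bool} (hp₁ : r₁ <+: p) (hp₂ : r₂ <+: p) : r₁ = r₂ := by
  rcases List.prefix_or_prefix_of_prefix hp₁ hp₂ with h | h
  · exact roots_prop S h₂ r₁ (mem_of_mem_roots S h₁) h
  · exact (roots_prop S h₁ r₂ (mem_of_mem_roots S h₂) h).symm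

lemma sum_hook_roots (S : Finset (List Bool)) : ∑ r ∈ roots S, hook S r = S.card := by
  classical
  unfold hook
  rw [← Finset.card_biUnion]
  · congr 1
    apply Finset.Subset.antisymm
    · intro p hp
      obtain ⟨r, hr, hpf⟩ := Finset.mem_biUnion.1 hp
      exact (Finset.mem_filter.1 hpf).1
    · intro p hp
      obtain ⟨r, hr, hrp⟩ := exists_root_prefix p hp
      exact Finset.mem_biUnion.2 ⟨r, hr, Finset.mem_filter.2 ⟨hp, hrp⟩⟩
  · intro r₁ h₁ r₂ h₂ hne
    refine Finset.disjoint_left.2 (fun p hp₁ hp₂ => ?_)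
    exact hne (roots_disjoint h₁ h₂ (Finset.mem_filter.1 hp₁).2 (Finset.mem_filter.1 hp₂).2)

lemma hook_erase {r : List Bool} (hr : r ∈ roots S) {p : List Bool} (hp : p ∈ S.erase r) :
    hook (S.erase r) p = hook S p := by
  classical
  unfold hook
  rw [Finset.filter_erase]
  rw [Finset.erase_eq_of_notMem]
  intro hmem
  have hpre : p <+: r := (Finset.mem_filter.1 hmem).2
  have hpS : p ∈ S := Finset.mem_of_mem_erase hp
  have := roots_prop S hr p hpS hpre
  exact (Finset.mem_erase.1 hp).1 this

theorem dec_hook_mul (S : Finset (List Bool)) :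
    Nat.card (Dec S) * ∏ p ∈ S, hook S p = Nat.factorial S.card := by
  classical
  induction S using Finset.strongInduction with
  | _ S ih =>
    rcases Finset.eq_empty_or_nonempty S with rfl | h
    · have hE : IsEmpty {p : List Bool // p ∈ (∅ : Finset (List Bool))} :=
        ⟨fun p => (Finset.notMem_empty p.1 p.2).elim⟩
      have hone : Nat.card (Dec (∅ : Finset (List Bool))) = 1 := by
        rw [Nat.card_eq_one_iff_unique]
        constructor
        · exact ⟨fun a b => Subtype.ext (funext fun p => hE.elim p)⟩
        · refine ⟨⟨fun p => hE.elim p, ⟨fun a b _ => hE.elim a, fun k => ?_⟩,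
            fun p q _ _ => hE.elim p⟩⟩
          exact absurd k.2 (by simp)
      rw [Finset.prod_empty, mul_one, hone]
      rfl
    · have hpos : 0 < S.card := Finset.card_pos.2 h
      rw [card_dec_eq_sum h, Finset.sum_mul]
      have hstep : ∀ r ∈ roots S,
          Nat.card (Dec (S.erase r)) * ∏ p ∈ S, hook S p = hook S r * Nat.factorial (S.card - 1) := by
        intro r hr
        have hrS := mem_of_mem_roots S hr
        have hprod : ∏ p ∈ S, hook S p = hook S r * ∏ p ∈ S.erase r, hook (S.erase r) p := by
          rw [Finset.prod_congr rfl (fun p hp => hook_erase hr hp)]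
          exact (Finset.mul_prod_erase S _ hrS).symm
        rw [hprod, mul_comm (hook S r), ← mul_assoc,
          ih (S.erase r) (Finset.erase_ssubset hrS), Finset.card_erase_of_mem hrS, mul_comm]
      rw [Finset.sum_congr rfl hstep, ← Finset.sum_mul, sum_hook_roots S]
      exact Nat.mul_factorial_pred hpos.ne'

end NAThook


namespace BT

lemma cons_mem_positions {l r : BT} {b : Bool} {p : List Bool} :
    (b :: p) ∈ (BT.node l r).positions ↔ p ∈ (if b then r else l).positions := by
  simp only [BT.positions, Finset.mem_insert, Finset.mem_union, Finset.mem_image]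
  cases b <;> simp

lemma mem_positions_append {B : BT} {p : List Bool} (hp : p ∈ B.positions) (q : List Bool) :
    p ++ q ∈ B.positions ↔ q ∈ (B.subtreeAt p).positions := by
  induction p generalizing B with
  | nil => cases B <;> exact Iff.rfl
  | cons b p ih =>
    cases B with
    | leaf => exact absurd hp (by simp [BT.positions])
    | node l r =>
      have hp' := cons_mem_positions.1 hp
      show (b :: (p ++ q)) ∈ _ ↔ _
      rw [cons_mem_positions]
      exact ih hp'

lemma side_hook (B : BT) (b : Bool) {p : List Bool}
    (hp : p ∈ B.positions.filter (fun q => q.getLast? = some b)) :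
    ((B.positions.filter (fun q => q.getLast? = some b)).filter (fun q => p <+: q)).card
      = ((B.subtreeAt p).positions.filter (fun q => q.getLast? = some b)).card + 1 := by
  classical
  obtain ⟨hpB, hplast⟩ := Finset.mem_filter.1 hp
  have hset : (B.positions.filter (fun q => q.getLast? = some b)).filter (fun q => p <+: q)
      = (insert [] ((B.subtreeAt p).positions.filter (fun q => q.getLast? = some b))).image
          (fun q' => p ++ q') := by
    ext q
    simp only [Finset.mem_filter, Finset.mem_image, Finset.mem_insert]
    constructor
    · rintro ⟨⟨hq, hlast⟩, hpre⟩
      obtain ⟨t, rfl⟩ := hpre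
      refine ⟨t, ?_, rfl⟩
      rcases eq_or_ne t [] with rfl | hne
      · exact Or.inl rfl
      · refine Or.inr ⟨(mem_positions_append hpB t).1 hq, ?_⟩
        rwa [List.getLast?_append_of_ne_nil _ hne] at hlast
    · rintro ⟨t, ht, rfl⟩
      rcases ht with rfl | ⟨htpos, htlast⟩
      · simp only [List.append_nil]
        exact ⟨⟨hpB, hplast⟩, List.prefix_refl _⟩
      · refine ⟨⟨(mem_positions_append hpB t).2 htpos, ?_⟩, ⟨t, rfl⟩⟩
        rcases eq_or_ne t [] with rfl | hne
        · simp at htlast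
        · rw [List.getLast?_append_of_ne_nil _ hne]
          exact htlast
  rw [hset, Finset.card_image_of_injective _ (fun a b h => List.append_cancel_left h),
    Finset.card_insert_of_notMem (by simp)]

end BT


noncomputable def natEquiv (B : BT) :
    NAT B ≃ NAThook.Dec B.leftPos × NAThook.Dec B.rightPos where
  toFun T := (⟨T.labL, T.bijL, T.ancL⟩, ⟨T.labR, T.bijR, T.ancR⟩)
  invFun P := ⟨P.1.1, P.2.1, P.1.2.1, P.2.2.1, P.1.2.2, P.2.2.2⟩
  left_inv T := rfl
  right_inv P := rfl

end Aux

/-- Hook-length formula for non-ambiguous trees: for any nonempty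
binary tree `B`, the number of non-ambiguous trees of shape `B` equals
`|LV(B)|! * |RV(B)|!` divided by the product over all left children `U` of `EL(U)`
(the number of left children in the subtree rooted at `U`, counting `U` itself)
times the product over all right children `U` of `ER(U)`. -/
theorem stmt1 (B : BT) (hB : B ≠ BT.leaf) :
    (Nat.card (NAT B) : ℚ) =
      ((B.leftPos.card).factorial * (B.rightPos.card).factorial : ℚ) /
        ((∏ p ∈ B.leftPos, (((B.subtreeAt p).leftPos.card + 1 : ℕ) : ℚ)) *
          ∏ p ∈ B.rightPos, (((B.subtreeAt p).rightPos.card + 1 : ℕ) : ℚ)) := by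
  classical
  have hL := NAThook.dec_hook_mul B.leftPos
  have hR := NAThook.dec_hook_mul B.rightPos
  have hcard : Nat.card (NAT B)
      = Nat.card (NAThook.Dec B.leftPos) * Nat.card (NAThook.Dec B.rightPos) := by
    rw [Nat.card_congr (natEquiv B), Nat.card_prod]
  have hprodL : ∏ p ∈ B.leftPos, NAThook.hook B.leftPos p
      = ∏ p ∈ B.leftPos, ((B.subtreeAt p).leftPos.card + 1) :=
    Finset.prod_congr rfl (fun p hp => BT.side_hook B false hp)
  have hprodR : ∏ p ∈ B.rightPos, NAThook.hook B.rightPos p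
      = ∏ p ∈ B.rightPos, ((B.subtreeAt p).rightPos.card + 1) :=
    Finset.prod_congr rfl (fun p hp => BT.side_hook B true hp)
  rw [hprodL] at hL
  rw [hprodR] at hR
  have hkey : Nat.card (NAT B)
      * ((∏ p ∈ B.leftPos, ((B.subtreeAt p).leftPos.card + 1))
        * ∏ p ∈ B.rightPos, ((B.subtreeAt p).rightPos.card + 1))
      = (B.leftPos.card).factorial * (B.rightPos.card).factorial := by
    rw [hcard]
    calc Nat.card (NAThook.Dec B.leftPos) * Nat.card (NAThook.Dec B.rightPos)
          * ((∏ p ∈ B.leftPos, ((B.subtreeAt p).leftPos.card + 1))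
            * ∏ p ∈ B.rightPos, ((B.subtreeAt p).rightPos.card + 1))
        = (Nat.card (NAThook.Dec B.leftPos)
              * ∏ p ∈ B.leftPos, ((B.subtreeAt p).leftPos.card + 1))
            * (Nat.card (NAThook.Dec B.rightPos)
              * ∏ p ∈ B.rightPos, ((B.subtreeAt p).rightPos.card + 1)) := by ring
      _ = (B.leftPos.card).factorial * (B.rightPos.card).factorial := by rw [hL, hR]
  have hLpos : (∏ p ∈ B.leftPos, (((B.subtreeAt p).leftPos.card + 1 : ℕ) : ℚ)) ≠ 0 := by
    apply Finset.prod_ne_zero_iff.2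
    intro p _
    positivity
  have hRpos : (∏ p ∈ B.rightPos, (((B.subtreeAt p).rightPos.card + 1 : ℕ) : ℚ)) ≠ 0 := by
    apply Finset.prod_ne_zero_iff.2
    intro p _
    positivity
  rw [eq_div_iff (mul_ne_zero hLpos hRpos)]
  push_cast
  exact_mod_cast congrArg (fun n : ℕ => (n : ℚ)) hkey
end

section
/- The generating functions of non-ambiguous trees satisfy the fixed-point differential equations LGFN = y + x + ∫_0^x ∫_0^y (∂_x LGFN)(u,v) · (∂_y LGFN)(u,v) du dv and GFN = (1 + ∫_0^x GFN(u,y) du) · (1 + ∫_0^y GFN(x,v) dv), as identities of formal power series in ℚ[[x,y]]. -/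
/-- The number of non-ambiguous trees (with nonempty shape) of geometric size `i × j`,
i.e. with `|LV| + 1 = i` and `|RV| + 1 = j`. -/
noncomputable def natCount (i j : ℕ) : ℕ :=
  Nat.card {T : Σ B : BT, NAT B //
    T.1 ≠ BT.leaf ∧ T.1.leftPos.card + 1 = i ∧ T.1.rightPos.card + 1 = j}

/-- `LGFN`, the doubly exponential generating series of all non-ambiguous trees,
including the two empty ones `∅_L` (of geometric size `(0,1)`, contributing `y`)
and `∅_R` (of geometric size `(1,0)`, contributing `x`):
the coefficient of `x^i y^j` is (number of NATs of geometric size `i×j`) / (i! j!). -/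
noncomputable def LGFN : MvPowerSeries (Fin 2) ℚ := fun d =>
  (if d 0 = 1 ∧ d 1 = 0 then 1 else 0) + (if d 0 = 0 ∧ d 1 = 1 then 1 else 0) +
    (natCount (d 0) (d 1) : ℚ) / (((d 0).factorial : ℚ) * ((d 1).factorial : ℚ))

/-- `GFN = ∂ₓ∂_y LGFN`: the coefficient of `x^i y^j` is
(number of nonempty NATs of geometric size `(i+1)×(j+1)`) / (i! j!). -/
noncomputable def GFN : MvPowerSeries (Fin 2) ℚ := fun d =>
  (natCount (d 0 + 1) (d 1 + 1) : ℚ) / (((d 0).factorial : ℚ) * ((d 1).factorial : ℚ))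

/-- Formal partial derivative in `x`. -/
noncomputable def dX (f : MvPowerSeries (Fin 2) ℚ) : MvPowerSeries (Fin 2) ℚ :=
  fun d => ((d 0 : ℚ) + 1) * f (d + Finsupp.single 0 1)

/-- Formal partial derivative in `y`. -/
noncomputable def dY (f : MvPowerSeries (Fin 2) ℚ) : MvPowerSeries (Fin 2) ℚ :=
  fun d => ((d 1 : ℚ) + 1) * f (d + Finsupp.single 1 1)

/-- Formal integral `∫_0^x f(u,y) du`. -/
noncomputable def iX (f : MvPowerSeries (Fin 2) ℚ) : MvPowerSeries (Fin 2) ℚ :=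
  fun d => if d 0 = 0 then 0 else ((d 0 : ℚ))⁻¹ * f (d - Finsupp.single 0 1)

/-- Formal integral `∫_0^y f(x,v) dv`. -/
noncomputable def iY (f : MvPowerSeries (Fin 2) ℚ) : MvPowerSeries (Fin 2) ℚ :=
  fun d => if d 1 = 0 then 0 else ((d 1 : ℚ))⁻¹ * f (d - Finsupp.single 1 1)

namespace BT

@[simp] lemma positions_leaf : positions leaf = ∅ := rfl
@[simp] lemma leftPos_leaf : leftPos leaf = ∅ := rfl
@[simp] lemma rightPos_leaf : rightPos leaf = ∅ := rfl

lemma mem_leftPos_ne_nil {B : BT} {p : List Bool} (h : p ∈ B.leftPos) : p ≠ [] := by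
  rcases Finset.mem_filter.1 h with ⟨-, h2⟩
  rintro rfl; simp at h2

lemma mem_rightPos_ne_nil {B : BT} {p : List Bool} (h : p ∈ B.rightPos) : p ≠ [] := by
  rcases Finset.mem_filter.1 h with ⟨-, h2⟩
  rintro rfl; simp at h2

lemma getLast?_cons (b : Bool) (q : List Bool) :
    (b :: q).getLast? = if q = [] then some b else q.getLast? := by
  cases q with
  | nil => simp
  | cons c t => simp [List.getLast?_cons_cons]

lemma nil_mem_positions {B : BT} : [] ∈ B.positions ↔ B ≠ leaf := by
  cases B <;> simp [positions]

lemma leftPos_node (L R : BT) :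
    leftPos (node L R) =
      (if L = leaf then ∅ else {[false]}) ∪
        ((leftPos L).image (List.cons false) ∪ (leftPos R).image (List.cons true)) := by
  ext p
  simp only [leftPos, positions, Finset.mem_filter, Finset.mem_insert, Finset.mem_union,
    Finset.mem_image]
  constructor
  · rintro ⟨(rfl | (⟨q, hq, rfl⟩ | ⟨q, hq, rfl⟩)), hlast⟩
    · simp at hlast
    · rcases eq_or_ne q [] with rfl | hqnil
      · left
        have : L ≠ leaf := nil_mem_positions.1 hq
        simp [this]
      · right; left
        rw [getLast?_cons, if_neg hqnil] at hlast
        exact ⟨q, ⟨hq, hlast⟩, rfl⟩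
    · rcases eq_or_ne q [] with rfl | hqnil
      · rw [getLast?_cons, if_pos rfl] at hlast; simp at hlast
      · right; right
        rw [getLast?_cons, if_neg hqnil] at hlast
        exact ⟨q, ⟨hq, hlast⟩, rfl⟩
  · rintro (h | ⟨q, ⟨h1, h2⟩, rfl⟩ | ⟨q, ⟨h1, h2⟩, rfl⟩)
    · rcases eq_or_ne L leaf with rfl | hL
      · simp at h
      · rw [if_neg hL] at h
        rcases Finset.mem_singleton.1 h with rfl
        exact ⟨Or.inr (Or.inl ⟨[], nil_mem_positions.2 hL, rfl⟩), by simp⟩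
    · refine ⟨Or.inr (Or.inl ⟨q, h1, rfl⟩), ?_⟩
      rw [getLast?_cons, if_neg (by rintro rfl; simp at h2)]; exact h2
    · refine ⟨Or.inr (Or.inr ⟨q, h1, rfl⟩), ?_⟩
      rw [getLast?_cons, if_neg (by rintro rfl; simp at h2)]; exact h2

lemma rightPos_node (L R : BT) :
    rightPos (node L R) =
      (if R = leaf then ∅ else {[true]}) ∪
        ((rightPos R).image (List.cons true) ∪ (rightPos L).image (List.cons false)) := by
  ext p
  simp only [rightPos, positions, Finset.mem_filter, Finset.mem_insert, Finset.mem_union,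
    Finset.mem_image]
  constructor
  · rintro ⟨(rfl | (⟨q, hq, rfl⟩ | ⟨q, hq, rfl⟩)), hlast⟩
    · simp at hlast
    · rcases eq_or_ne q [] with rfl | hqnil
      · rw [getLast?_cons, if_pos rfl] at hlast; simp at hlast
      · right; right
        rw [getLast?_cons, if_neg hqnil] at hlast
        exact ⟨q, ⟨hq, hlast⟩, rfl⟩
    · rcases eq_or_ne q [] with rfl | hqnil
      · left
        have : R ≠ leaf := nil_mem_positions.1 hq
        simp [this]
      · right; left
        rw [getLast?_cons, if_neg hqnil] at hlast
        exact ⟨q, ⟨hq, hlast⟩, rfl⟩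
  · rintro (h | ⟨q, ⟨h1, h2⟩, rfl⟩ | ⟨q, ⟨h1, h2⟩, rfl⟩)
    · rcases eq_or_ne R leaf with rfl | hR
      · simp at h
      · rw [if_neg hR] at h
        rcases Finset.mem_singleton.1 h with rfl
        exact ⟨Or.inr (Or.inr ⟨[], nil_mem_positions.2 hR, rfl⟩), by simp⟩
    · refine ⟨Or.inr (Or.inr ⟨q, h1, rfl⟩), ?_⟩
      rw [getLast?_cons, if_neg (by rintro rfl; simp at h2)]; exact h2
    · refine ⟨Or.inr (Or.inl ⟨q, h1, rfl⟩), ?_⟩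
      rw [getLast?_cons, if_neg (by rintro rfl; simp at h2)]; exact h2

end BT


section Rank
variable {n : ℕ}

/-- The rank of `x` within a finset `V` of `Fin n`. -/
def frank (V : Finset (Fin n)) (x : Fin n) : ℕ := (V.filter (fun y => y < x)).card

lemma frank_lt_card {V : Finset (Fin n)} {x : Fin n} (hx : x ∈ V) : frank V x < V.card := by
  apply Finset.card_lt_card
  refine ⟨Finset.filter_subset _ _, fun hsub => ?_⟩
  have := hsub hx
  simp at this

lemma frank_strictMonoOn {V : Finset (Fin n)} {x y : Fin n} (hx : x ∈ V) (hy : y ∈ V)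
    (hxy : x < y) : frank V x < frank V y := by
  apply Finset.card_lt_card
  constructor
  · intro z hz
    rcases Finset.mem_filter.1 hz with ⟨h1, h2⟩
    exact Finset.mem_filter.2 ⟨h1, h2.trans hxy⟩
  · intro hsub
    have := hsub (Finset.mem_filter.2 ⟨hx, hxy⟩)
    simp at this

lemma frank_lt_iff {V : Finset (Fin n)} {x y : Fin n} (hx : x ∈ V) (hy : y ∈ V) :
    frank V x < frank V y ↔ x < y := by
  constructor
  · intro h
    by_contra hle
    push_neg at hle
    rcases lt_or_eq_of_le hle with h' | rfl
    · exact absurd (frank_strictMonoOn hy hx h') (by omega)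
    · omega
  · exact frank_strictMonoOn hx hy

lemma frank_injOn {V : Finset (Fin n)} {x y : Fin n} (hx : x ∈ V) (hy : y ∈ V)
    (h : frank V x = frank V y) : x = y := by
  rcases lt_trichotomy x y with h' | h' | h'
  · exact absurd (frank_strictMonoOn hx hy h') (by omega)
  · exact h'
  · exact absurd (frank_strictMonoOn hy hx h') (by omega)

lemma frank_orderEmbOfFin {V : Finset (Fin n)} {k : ℕ} (h : V.card = k) (i : Fin k) :
    frank V (V.orderEmbOfFin h i) = i := by
  have hinj : Function.Injective (V.orderEmbOfFin h) := (V.orderEmbOfFin h).injective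
  have himg : V.filter (fun y => y < V.orderEmbOfFin h i) =
      (Finset.univ.filter (fun j : Fin k => j < i)).image (V.orderEmbOfFin h) := by
    ext x
    simp only [Finset.mem_filter, Finset.mem_image, Finset.mem_univ, true_and]
    constructor
    · rintro ⟨hxV, hlt⟩
      have : x ∈ Set.range (V.orderEmbOfFin h) := by
        rw [Finset.range_orderEmbOfFin]; exact hxV
      rcases this with ⟨j, rfl⟩
      exact ⟨j, (V.orderEmbOfFin h).lt_iff_lt.1 hlt, rfl⟩
    · rintro ⟨j, hj, rfl⟩
      exact ⟨Finset.orderEmbOfFin_mem _ _ _, (V.orderEmbOfFin h).lt_iff_lt.2 hj⟩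
  rw [frank, himg, Finset.card_image_of_injective _ hinj]
  have : Finset.univ.filter (fun j : Fin k => j < i) = Finset.Iio i := by
    ext j; simp
  rw [this, Fin.card_Iio]

end Rank

/-- A decreasing labelling of a finset of positions w.r.t. the strict-prefix order. -/
structure DLab (S : Finset (List Bool)) where
  lab : {p : List Bool // p ∈ S} → Fin S.card
  bij : Function.Bijective lab
  anc : ∀ p q : {p : List Bool // p ∈ S}, p.1 <+: q.1 → p.1 ≠ q.1 → lab q < lab p

lemma DLab.ext' {S : Finset (List Bool)} {T₁ T₂ : DLab S} (h : T₁.lab = T₂.lab) : T₁ = T₂ := by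
  cases T₁; cases T₂; simp_all

lemma bij_of_inj {S : Finset (List Bool)} (f : {p : List Bool // p ∈ S} → Fin S.card)
    (h : Function.Injective f) : Function.Bijective f := by
  rw [Fintype.bijective_iff_injective_and_card]
  exact ⟨h, by simp⟩

instance (S : Finset (List Bool)) : Finite (DLab S) :=
  Finite.of_injective (fun D : DLab S => D.lab) (fun _ _ h => DLab.ext' h)

noncomputable instance (S : Finset (List Bool)) : Fintype (DLab S) := Fintype.ofFinite _

instance : Unique (DLab (∅ : Finset (List Bool))) where
  default := ⟨fun p => absurd p.2 (by exact absurd p.2 (Finset.notMem_empty _)), by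
      constructor
      · intro p; exact absurd p.2 (by exact absurd p.2 (Finset.notMem_empty _))
      · intro t; exact absurd (Finset.card_empty ▸ t).2 (by omega)
    , fun p => absurd p.2 (by exact absurd p.2 (Finset.notMem_empty _))⟩
  uniq := by
    intro D
    apply DLab.ext'
    funext p
    exact absurd p.2 (by exact absurd p.2 (Finset.notMem_empty _))

@[simp] lemma card_DLab_empty : Nat.card (DLab (∅ : Finset (List Bool))) = 1 :=
  Nat.card_unique
section MapRoot

/-- Transfer of decreasing labellings along an injective prefix-preserving map. -/
lemma card_DLab_image (φ : List Bool → List Bool) (hinj : Function.Injective φ)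
    (hpref : ∀ p q : List Bool, φ p <+: φ q ↔ p <+: q) (S : Finset (List Bool)) :
    Nat.card (DLab (S.image φ)) = Nat.card (DLab S) := by
  have hcard : (S.image φ).card = S.card := Finset.card_image_of_injective _ hinj
  have hmem : ∀ p : List Bool, p ∈ S → φ p ∈ S.image φ := fun p hp =>
    Finset.mem_image.2 ⟨p, hp, rfl⟩
  refine Nat.card_eq_of_bijective
    (fun D : DLab (S.image φ) =>
      (⟨fun p => Fin.cast hcard (D.lab ⟨φ p.1, hmem p.1 p.2⟩),
        bij_of_inj _ (fun p q h => by
          have hv0 := congrArg Fin.val h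
          simp only [Fin.coe_cast] at hv0
          have hv : (D.lab ⟨φ p.1, hmem p.1 p.2⟩ : ℕ) = (D.lab ⟨φ q.1, hmem q.1 q.2⟩ : ℕ) := hv0
          have := D.bij.1 (Fin.val_injective hv)
          exact Subtype.ext (hinj (congrArg Subtype.val this))),
        fun p q hpq hne => by
          have h1 : φ p.1 <+: φ q.1 := (hpref _ _).2 hpq
          have h2 : φ p.1 ≠ φ q.1 := fun h => hne (hinj h)
          have := D.anc ⟨φ p.1, hmem p.1 p.2⟩ ⟨φ q.1, hmem q.1 q.2⟩ h1 h2
          exact Fin.lt_iff_val_lt_val.2 (Fin.lt_iff_val_lt_val.1 this)⟩ : DLab S)) ?_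
  constructor
  · intro D₁ D₂ h
    apply DLab.ext'
    funext q
    rcases Finset.mem_image.1 q.2 with ⟨p, hp, hq⟩
    have h2 := congrFun (congrArg DLab.lab h) ⟨p, hp⟩
    have h30 := congrArg Fin.val h2
    simp only [Fin.coe_cast] at h30
    have h3 : (D₁.lab ⟨φ p, hmem p hp⟩ : ℕ) = (D₂.lab ⟨φ p, hmem p hp⟩ : ℕ) := h30
    have hq' : q = ⟨φ p, hmem p hp⟩ := Subtype.ext hq.symm
    rw [hq']
    exact Fin.val_injective h3
  · intro E
    classical
    have hφinv : ∀ q : {p // p ∈ S.image φ}, ∃ p, ∃ _ : p ∈ S, φ p = q.1 := by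
      intro q
      rcases Finset.mem_image.1 q.2 with ⟨p, hp, hq⟩
      exact ⟨p, hp, hq⟩
    choose ψ hψS hψ using hφinv
    refine ⟨⟨fun q => Fin.cast hcard.symm (E.lab ⟨ψ q, hψS q⟩),
      bij_of_inj _ (fun p q h => by
        have hv0 := congrArg Fin.val h
        simp only [Fin.coe_cast] at hv0
        have hv : (E.lab ⟨ψ p, hψS p⟩ : ℕ) = (E.lab ⟨ψ q, hψS q⟩ : ℕ) := hv0
        have := E.bij.1 (Fin.val_injective hv)
        have h2 : ψ p = ψ q := congrArg Subtype.val this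
        exact Subtype.ext ((hψ p).symm.trans ((congrArg φ h2).trans (hψ q)))),
      fun p q hpq hne => by
        have hp' : φ (ψ p) = p.1 := hψ p
        have hq' : φ (ψ q) = q.1 := hψ q
        have h1 : ψ p <+: ψ q := (hpref _ _).1 (by rw [hp', hq']; exact hpq)
        have h2 : ψ p ≠ ψ q := fun h => hne (by rw [← hp', ← hq', h])
        have := E.anc ⟨ψ p, hψS p⟩ ⟨ψ q, hψS q⟩ h1 h2
        exact Fin.lt_iff_val_lt_val.2 (Fin.lt_iff_val_lt_val.1 this)⟩, ?_⟩
    apply DLab.ext'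
    funext p
    apply Fin.val_injective
    show (E.lab ⟨ψ ⟨φ p.1, hmem p.1 p.2⟩, _⟩ : ℕ) = (E.lab p : ℕ)
    congr 2
    exact Subtype.ext (hinj (hψ ⟨φ p.1, hmem p.1 p.2⟩))

/-- Removing a root that is an ancestor of everything. -/
lemma card_DLab_insert_root (r : List Bool) (S : Finset (List Bool)) (hr : r ∉ S)
    (hanc : ∀ q ∈ S, r <+: q ∧ r ≠ q) :
    Nat.card (DLab (insert r S)) = Nat.card (DLab S) := by
  classical
  have hcard : (insert r S).card = S.card + 1 := Finset.card_insert_of_notMem hr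
  have hmem : ∀ p : List Bool, p ∈ S → p ∈ insert r S := fun p hp => Finset.mem_insert_of_mem hp
  have hmS : ∀ q : {p // p ∈ insert r S}, q.1 ≠ r → q.1 ∈ S := by
    intro q hq
    rcases Finset.mem_insert.1 q.2 with h | h
    · exact absurd h hq
    · exact h
  -- the label of r is always the max
  have hmax : ∀ D : DLab (insert r S), (D.lab ⟨r, Finset.mem_insert_self r S⟩ : ℕ) = S.card := by
    intro D
    have hlt : ∀ q : {p // p ∈ insert r S}, q.1 ≠ r →
        D.lab q < D.lab ⟨r, Finset.mem_insert_self r S⟩ := fun q hq =>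
      D.anc ⟨r, Finset.mem_insert_self r S⟩ q (hanc q.1 (hmS q hq)).1 (hanc q.1 (hmS q hq)).2
    by_contra hne
    have hub := (D.lab ⟨r, Finset.mem_insert_self r S⟩).2
    obtain ⟨q, hq⟩ := D.bij.2 ⟨S.card, by omega⟩
    rcases eq_or_ne q.1 r with hqr | hqr
    · have hq2 : q = ⟨r, Finset.mem_insert_self r S⟩ := Subtype.ext hqr
      rw [hq2] at hq
      have : (D.lab ⟨r, Finset.mem_insert_self r S⟩ : ℕ) = S.card := congrArg Fin.val hq
      exact hne this
    · have h1 := hlt q hqr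
      rw [hq] at h1
      have h2 : S.card < (D.lab ⟨r, Finset.mem_insert_self r S⟩ : ℕ) :=
        Fin.lt_iff_val_lt_val.1 h1
      omega
  refine Nat.card_eq_of_bijective
    (fun D : DLab (insert r S) =>
      (⟨fun p => ⟨(D.lab ⟨p.1, hmem p.1 p.2⟩ : ℕ), by
          have hne : p.1 ≠ r := fun h => hr (h ▸ p.2)
          have h1 := D.anc ⟨r, Finset.mem_insert_self r S⟩ ⟨p.1, hmem p.1 p.2⟩
            (hanc p.1 p.2).1 (hanc p.1 p.2).2
          have h2 := hmax D
          have h3 : (D.lab ⟨p.1, hmem p.1 p.2⟩ : ℕ) <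
              (D.lab ⟨r, Finset.mem_insert_self r S⟩ : ℕ) := Fin.lt_iff_val_lt_val.1 h1
          omega⟩,
        bij_of_inj _ (fun p q h => by
          have hv0 := congrArg Fin.val h
          have hv : (D.lab ⟨p.1, hmem p.1 p.2⟩ : ℕ) = (D.lab ⟨q.1, hmem q.1 q.2⟩ : ℕ) := hv0
          have := D.bij.1 (Fin.val_injective hv)
          have h5 := congrArg Subtype.val this
          exact Subtype.ext h5),
        fun p q hpq hne => by
          have := D.anc ⟨p.1, hmem p.1 p.2⟩ ⟨q.1, hmem q.1 q.2⟩ hpq hne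
          exact Fin.lt_iff_val_lt_val.2 (Fin.lt_iff_val_lt_val.1 this)⟩ : DLab S)) ?_
  constructor
  · intro D₁ D₂ h
    apply DLab.ext'
    funext q
    rcases eq_or_ne q.1 r with hq | hq
    · have hq' : q = ⟨r, Finset.mem_insert_self r S⟩ := Subtype.ext hq
      rw [hq']
      apply Fin.val_injective
      rw [hmax D₁, hmax D₂]
    · have hqS := hmS q hq
      have h2 := congrFun (congrArg DLab.lab h) ⟨q.1, hqS⟩
      have h30 := congrArg Fin.val h2
      have h3 : (D₁.lab ⟨q.1, hmem q.1 hqS⟩ : ℕ) = (D₂.lab ⟨q.1, hmem q.1 hqS⟩ : ℕ) := h30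
      have hqq : (⟨q.1, hmem q.1 hqS⟩ : {p // p ∈ insert r S}) = q := Subtype.ext rfl
      rw [hqq] at h3
      exact Fin.val_injective h3
  · intro E
    refine ⟨⟨fun q => if hqr : q.1 = r then ⟨S.card, by omega⟩
        else ⟨(E.lab ⟨q.1, hmS q hqr⟩ : ℕ), by have := (E.lab ⟨q.1, hmS q hqr⟩).2; omega⟩,
      bij_of_inj _ (fun p q h => by
        by_cases hp : p.1 = r <;> by_cases hq : q.1 = r
        · exact Subtype.ext (hp.trans hq.symm)
        · rw [dif_pos hp, dif_neg hq] at h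
          have hv0 := congrArg Fin.val h
          have hv : S.card = (E.lab ⟨q.1, hmS q hq⟩ : ℕ) := hv0
          have h2 := (E.lab ⟨q.1, hmS q hq⟩).2
          omega
        · rw [dif_neg hp, dif_pos hq] at h
          have hv0 := congrArg Fin.val h
          have hv : (E.lab ⟨p.1, hmS p hp⟩ : ℕ) = S.card := hv0
          have h2 := (E.lab ⟨p.1, hmS p hp⟩).2
          omega
        · rw [dif_neg hp, dif_neg hq] at h
          have hv0 := congrArg Fin.val h
          have hv : (E.lab ⟨p.1, hmS p hp⟩ : ℕ) = (E.lab ⟨q.1, hmS q hq⟩ : ℕ) := hv0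
          have := E.bij.1 (Fin.val_injective hv)
          have h5 := congrArg Subtype.val this
          exact Subtype.ext h5),
      fun p q hpq hne => by
        by_cases hp : p.1 = r <;> by_cases hq : q.1 = r
        · exact absurd (hp.trans hq.symm) hne
        · rw [dif_pos hp, dif_neg hq]
          apply Fin.lt_iff_val_lt_val.2
          show (E.lab ⟨q.1, hmS q hq⟩ : ℕ) < S.card
          have := (E.lab ⟨q.1, hmS q hq⟩).2
          omega
        · exfalso
          have hpS := hmS p hp
          have h1 := (hanc p.1 hpS).1
          have h2 : p.1 <+: r := by simpa [hq] using hpq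
          have hlen : p.1.length = r.length := le_antisymm h2.length_le h1.length_le
          exact (hanc p.1 hpS).2 (h2.eq_of_length hlen).symm
        · rw [dif_neg hp, dif_neg hq]
          apply Fin.lt_iff_val_lt_val.2
          show (E.lab ⟨q.1, hmS q hq⟩ : ℕ) < (E.lab ⟨p.1, hmS p hp⟩ : ℕ)
          have := E.anc ⟨p.1, hmS p hp⟩ ⟨q.1, hmS q hq⟩ hpq hne
          exact Fin.lt_iff_val_lt_val.1 this⟩, ?_⟩
    apply DLab.ext'
    funext p
    apply Fin.val_injective
    dsimp only
    rw [dif_neg (fun h : p.1 = r => hr (h ▸ p.2))]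
end MapRoot

section Split

/-- Glue two labellings along a choice of label set. -/
noncomputable def glueLab {T U : Finset (List Bool)} {n : ℕ}
    (hsub : ∀ x : List Bool, x ∈ T ∪ U → x ∉ U → x ∈ T)
    (V : Finset (Fin n)) (hV : V.card = U.card) (hVc : Vᶜ.card = T.card)
    (DT : DLab T) (DU : DLab U) (x : {p : List Bool // p ∈ T ∪ U}) : Fin n :=
  if hx : x.1 ∈ U then V.orderEmbOfFin hV (DU.lab ⟨x.1, hx⟩)
  else Vᶜ.orderEmbOfFin hVc (DT.lab ⟨x.1, hsub x.1 x.2 hx⟩)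

lemma glueLab_pos {T U : Finset (List Bool)} {n : ℕ}
    (hsub : ∀ x : List Bool, x ∈ T ∪ U → x ∉ U → x ∈ T)
    (V : Finset (Fin n)) (hV : V.card = U.card) (hVc : Vᶜ.card = T.card)
    (DT : DLab T) (DU : DLab U) (x : {p : List Bool // p ∈ T ∪ U}) (hx : x.1 ∈ U) :
    glueLab hsub V hV hVc DT DU x = V.orderEmbOfFin hV (DU.lab ⟨x.1, hx⟩) := by
  simp only [glueLab]
  rw [dif_pos hx]

lemma glueLab_neg {T U : Finset (List Bool)} {n : ℕ}
    (hsub : ∀ x : List Bool, x ∈ T ∪ U → x ∉ U → x ∈ T)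
    (V : Finset (Fin n)) (hV : V.card = U.card) (hVc : Vᶜ.card = T.card)
    (DT : DLab T) (DU : DLab U) (x : {p : List Bool // p ∈ T ∪ U}) (hx : x.1 ∉ U) :
    glueLab hsub V hV hVc DT DU x = Vᶜ.orderEmbOfFin hVc (DT.lab ⟨x.1, hsub x.1 x.2 hx⟩) := by
  simp only [glueLab]
  rw [dif_neg hx]

/-- Splitting a decreasing labelling over two prefix-independent parts. -/
lemma card_DLab_union (T U : Finset (List Bool)) (hd : Disjoint T U)
    (hcross : ∀ p ∈ T, ∀ q ∈ U, ¬ p <+: q ∧ ¬ q <+: p) :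
    Nat.card (DLab (T ∪ U)) =
      ((T ∪ U).card.choose U.card) * Nat.card (DLab T) * Nat.card (DLab U) := by
  classical
  set n := (T ∪ U).card with hn
  have hnc : T.card + U.card = n := (Finset.card_union_of_disjoint hd).symm
  have hmemU : ∀ q : List Bool, q ∈ U → q ∈ T ∪ U := fun q hq => Finset.mem_union_right T hq
  have hmemT : ∀ p : List Bool, p ∈ T → p ∈ T ∪ U := fun p hp => Finset.mem_union_left U hp
  have hTofU : ∀ p : List Bool, p ∈ T ∪ U → p ∉ U → p ∈ T := by
    intro p hp hpu
    rcases Finset.mem_union.1 hp with h | h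
    · exact h
    · exact absurd h hpu
  have hnotU : ∀ p : List Bool, p ∈ T → p ∉ U := fun p hp hq => Finset.disjoint_left.1 hd hp hq
  -- the set of labels used on U
  let VU : DLab (T ∪ U) → Finset (Fin n) := fun D =>
    U.attach.image (fun q => D.lab ⟨q.1, hmemU q.1 q.2⟩)
  have hVUcard : ∀ D, (VU D).card = U.card := by
    intro D
    rw [Finset.card_image_of_injOn, Finset.card_attach]
    intro a _ b _ h
    have h2 := D.bij.1 h
    have h3 := congrArg Subtype.val h2
    exact Subtype.ext h3
  have hVUmem : ∀ D (q : List Bool) (hq : q ∈ U), D.lab ⟨q, hmemU q hq⟩ ∈ VU D := by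
    intro D q hq
    exact Finset.mem_image.2 ⟨⟨q, hq⟩, Finset.mem_attach _ _, rfl⟩
  have hVUnotmem : ∀ D (p : List Bool) (hp : p ∈ T), D.lab ⟨p, hmemT p hp⟩ ∈ (VU D)ᶜ := by
    intro D p hp
    rw [Finset.mem_compl]
    intro hmem
    rcases Finset.mem_image.1 hmem with ⟨q, _, hq⟩
    have h2 := D.bij.1 hq
    have hpq : q.1 = p := congrArg Subtype.val h2
    exact Finset.disjoint_left.1 hd hp (hpq ▸ q.2)
  have hVUccard : ∀ D, ((VU D)ᶜ).card = T.card := by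
    intro D
    rw [Finset.card_compl, hVUcard]
    simp only [Fintype.card_fin]
    omega
  refine Nat.card_eq_of_bijective (fun D : DLab (T ∪ U) =>
    ((⟨VU D, hVUcard D⟩ : {V : Finset (Fin n) // V.card = U.card}),
     (⟨fun p => ⟨frank ((VU D)ᶜ) (D.lab ⟨p.1, hmemT p.1 p.2⟩), by
          have := frank_lt_card (hVUnotmem D p.1 p.2)
          rwa [hVUccard D] at this⟩,
        bij_of_inj _ (fun p q h => by
          have hv0 := congrArg Fin.val h
          have hv : frank ((VU D)ᶜ) (D.lab ⟨p.1, hmemT p.1 p.2⟩) =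
              frank ((VU D)ᶜ) (D.lab ⟨q.1, hmemT q.1 q.2⟩) := hv0
          have h2 := frank_injOn (hVUnotmem D p.1 p.2) (hVUnotmem D q.1 q.2) hv
          have h3 := D.bij.1 h2
          have h4 := congrArg Subtype.val h3
          exact Subtype.ext h4),
        fun p q hpq hne => by
          have h1 := D.anc ⟨p.1, hmemT p.1 p.2⟩ ⟨q.1, hmemT q.1 q.2⟩ hpq hne
          have := frank_strictMonoOn (hVUnotmem D q.1 q.2) (hVUnotmem D p.1 p.2) h1
          exact Fin.lt_iff_val_lt_val.2 this⟩ : DLab T),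
     (⟨fun q => ⟨frank (VU D) (D.lab ⟨q.1, hmemU q.1 q.2⟩), by
          have := frank_lt_card (hVUmem D q.1 q.2)
          rwa [hVUcard D] at this⟩,
        bij_of_inj _ (fun p q h => by
          have hv0 := congrArg Fin.val h
          have hv : frank (VU D) (D.lab ⟨p.1, hmemU p.1 p.2⟩) =
              frank (VU D) (D.lab ⟨q.1, hmemU q.1 q.2⟩) := hv0
          have h2 := frank_injOn (hVUmem D p.1 p.2) (hVUmem D q.1 q.2) hv
          have h3 := D.bij.1 h2
          have h4 := congrArg Subtype.val h3
          exact Subtype.ext h4),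
        fun p q hpq hne => by
          have h1 := D.anc ⟨p.1, hmemU p.1 p.2⟩ ⟨q.1, hmemU q.1 q.2⟩ hpq hne
          have := frank_strictMonoOn (hVUmem D q.1 q.2) (hVUmem D p.1 p.2) h1
          exact Fin.lt_iff_val_lt_val.2 this⟩ : DLab U))) ?_ |>.trans ?_
  · constructor
    · -- injectivity
      intro D₁ D₂ h
      have hV : VU D₁ = VU D₂ := congrArg Subtype.val (congrArg Prod.fst h)
      have hT2 := congrArg (fun x => x.2.1.lab) h
      have hU2 := congrArg (fun x => x.2.2.lab) h
      apply DLab.ext'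
      funext x
      by_cases hx : x.1 ∈ U
      · have h2 := congrFun hU2 ⟨x.1, hx⟩
        have h3 := congrArg Fin.val h2
        have h4 : frank (VU D₁) (D₁.lab ⟨x.1, hmemU x.1 hx⟩) =
            frank (VU D₂) (D₂.lab ⟨x.1, hmemU x.1 hx⟩) := h3
        rw [← hV] at h4
        have h5 := frank_injOn (hVUmem D₁ x.1 hx) (hV ▸ hVUmem D₂ x.1 hx) h4
        have hxx : (⟨x.1, hmemU x.1 hx⟩ : {p // p ∈ T ∪ U}) = x := Subtype.ext rfl
        rw [hxx] at h5
        exact h5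
      · have hxT : x.1 ∈ T := hTofU x.1 x.2 hx
        have h2 := congrFun hT2 ⟨x.1, hxT⟩
        have h3 := congrArg Fin.val h2
        have h4 : frank ((VU D₁)ᶜ) (D₁.lab ⟨x.1, hmemT x.1 hxT⟩) =
            frank ((VU D₂)ᶜ) (D₂.lab ⟨x.1, hmemT x.1 hxT⟩) := h3
        rw [← hV] at h4
        have h5 := frank_injOn (hVUnotmem D₁ x.1 hxT) (hV ▸ hVUnotmem D₂ x.1 hxT) h4
        have hxx : (⟨x.1, hmemT x.1 hxT⟩ : {p // p ∈ T ∪ U}) = x := Subtype.ext rfl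
        rw [hxx] at h5
        exact h5
    · -- surjectivity
      rintro ⟨⟨V, hV⟩, DT, DU⟩
      have hVc : (Vᶜ).card = T.card := by
        rw [Finset.card_compl, hV]
        simp only [Fintype.card_fin]
        omega
      have hinj : Function.Injective (glueLab hTofU V hV hVc DT DU) := by
        intro p q h
        by_cases hp : p.1 ∈ U <;> by_cases hq : q.1 ∈ U
        · rw [glueLab_pos _ _ _ _ _ _ _ hp, glueLab_pos _ _ _ _ _ _ _ hq] at h
          have h2 := DU.bij.1 ((V.orderEmbOfFin hV).injective h)
          have h3 := congrArg Subtype.val h2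
          exact Subtype.ext h3
        · exfalso
          have h1 : glueLab hTofU V hV hVc DT DU p ∈ V := by
            rw [glueLab_pos _ _ _ _ _ _ _ hp]; exact Finset.orderEmbOfFin_mem _ _ _
          have h2 : glueLab hTofU V hV hVc DT DU q ∈ Vᶜ := by
            rw [glueLab_neg _ _ _ _ _ _ _ hq]; exact Finset.orderEmbOfFin_mem _ _ _
          rw [h] at h1
          exact (Finset.mem_compl.1 h2) h1
        · exfalso
          have h1 : glueLab hTofU V hV hVc DT DU q ∈ V := by
            rw [glueLab_pos _ _ _ _ _ _ _ hq]; exact Finset.orderEmbOfFin_mem _ _ _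
          have h2 : glueLab hTofU V hV hVc DT DU p ∈ Vᶜ := by
            rw [glueLab_neg _ _ _ _ _ _ _ hp]; exact Finset.orderEmbOfFin_mem _ _ _
          rw [← h] at h1
          exact (Finset.mem_compl.1 h2) h1
        · rw [glueLab_neg _ _ _ _ _ _ _ hp, glueLab_neg _ _ _ _ _ _ _ hq] at h
          have h2 := DT.bij.1 ((Vᶜ.orderEmbOfFin hVc).injective h)
          have h3 := congrArg Subtype.val h2
          exact Subtype.ext h3
      have hanc : ∀ p q : {p // p ∈ T ∪ U}, p.1 <+: q.1 → p.1 ≠ q.1 →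
          glueLab hTofU V hV hVc DT DU q < glueLab hTofU V hV hVc DT DU p := by
        intro p q hpq hne
        by_cases hp : p.1 ∈ U <;> by_cases hq : q.1 ∈ U
        · rw [glueLab_pos _ _ _ _ _ _ _ hp, glueLab_pos _ _ _ _ _ _ _ hq]
          exact (V.orderEmbOfFin hV).lt_iff_lt.2 (DU.anc ⟨p.1, hp⟩ ⟨q.1, hq⟩ hpq hne)
        · exact absurd hpq (hcross q.1 (hTofU q.1 q.2 hq) p.1 hp).2
        · exact absurd hpq (hcross p.1 (hTofU p.1 p.2 hp) q.1 hq).1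
        · rw [glueLab_neg _ _ _ _ _ _ _ hp, glueLab_neg _ _ _ _ _ _ _ hq]
          exact (Vᶜ.orderEmbOfFin hVc).lt_iff_lt.2
            (DT.anc ⟨p.1, hTofU p.1 p.2 hp⟩ ⟨q.1, hTofU q.1 q.2 hq⟩ hpq hne)
      refine ⟨⟨glueLab hTofU V hV hVc DT DU, bij_of_inj _ hinj, hanc⟩, ?_⟩
      set D : DLab (T ∪ U) := ⟨glueLab hTofU V hV hVc DT DU, bij_of_inj _ hinj, hanc⟩ with hDdef
      have hDlab : ∀ x : {p // p ∈ T ∪ U}, D.lab x = glueLab hTofU V hV hVc DT DU x :=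
        fun x => rfl
      have hVUD : VU D = V := by
        ext x
        constructor
        · intro hx
          rcases Finset.mem_image.1 hx with ⟨q, _, hq⟩
          rw [← hq, hDlab, glueLab_pos _ _ _ _ _ _ _ q.2]
          exact Finset.orderEmbOfFin_mem _ _ _
        · intro hx
          have : x ∈ Set.range (V.orderEmbOfFin hV) := by
            rw [Finset.range_orderEmbOfFin]; exact hx
          rcases this with ⟨i, hi⟩
          rcases DU.bij.2 i with ⟨q, hq⟩
          apply Finset.mem_image.2
          refine ⟨⟨q.1, q.2⟩, Finset.mem_attach _ _, ?_⟩
          rw [hDlab, glueLab_pos _ _ _ _ _ _ _ q.2]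
          have hqq : (⟨q.1, q.2⟩ : {p // p ∈ U}) = q := Subtype.ext rfl
          rw [hqq, hq, hi]
      refine Prod.ext (Subtype.ext hVUD) (Prod.ext ?_ ?_)
      · apply DLab.ext'
        funext p
        apply Fin.val_injective
        show frank ((VU D)ᶜ) (D.lab ⟨p.1, hmemT p.1 p.2⟩) = (DT.lab p : ℕ)
        rw [hVUD, hDlab, glueLab_neg _ _ _ _ _ _ _ (hnotU p.1 p.2)]
        have hpp : (⟨p.1, hTofU p.1 (hmemT p.1 p.2) (hnotU p.1 p.2)⟩ : {p // p ∈ T}) = p :=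
          Subtype.ext rfl
        rw [hpp, frank_orderEmbOfFin]
      · apply DLab.ext'
        funext q
        apply Fin.val_injective
        show frank (VU D) (D.lab ⟨q.1, hmemU q.1 q.2⟩) = (DU.lab q : ℕ)
        rw [hVUD, hDlab, glueLab_pos _ _ _ _ _ _ _ q.2]
        have hqq : (⟨q.1, q.2⟩ : {p // p ∈ U}) = q := Subtype.ext rfl
        rw [hqq, frank_orderEmbOfFin]
  · rw [Nat.card_prod, Nat.card_prod]
    have h1 : Nat.card {V : Finset (Fin n) // V.card = U.card} = n.choose U.card := by
      rw [Nat.card_eq_fintype_card, Fintype.card_finset_len]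
      simp
    rw [h1]
    ring
end Split
section Trees
open BT

lemma cons_pref_iff (b : Bool) : ∀ p q : List Bool, b :: p <+: b :: q ↔ p <+: q := by
  intro p q
  rw [List.cons_prefix_cons]
  simp

lemma card_NAT_eq (B : BT) :
    Nat.card (NAT B) = Nat.card (DLab B.leftPos) * Nat.card (DLab B.rightPos) := by
  rw [← Nat.card_prod]
  apply Nat.card_eq_of_bijective (fun T : NAT B =>
    ((⟨T.labL, T.bijL, T.ancL⟩ : DLab B.leftPos), (⟨T.labR, T.bijR, T.ancR⟩ : DLab B.rightPos)))
  constructor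
  · intro T₁ T₂ h
    have h1 := congrArg (fun x => x.1.lab) h
    have h2 := congrArg (fun x => x.2.lab) h
    cases T₁; cases T₂; simp_all
  · rintro ⟨⟨labL, bijL, ancL⟩, ⟨labR, bijR, ancR⟩⟩
    exact ⟨⟨labL, labR, bijL, bijR, ancL, ancR⟩, rfl⟩

/-- Generic: an optional root together with images of two independent parts. -/
lemma card_DLab_sided (r : Bool) (emp : Prop) [Decidable emp] (X Y : Finset (List Bool))
    (hX : emp → X = ∅) (hXne : ∀ p ∈ X, p ≠ []) (hYne : ∀ p ∈ Y, p ≠ []) :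
    Nat.card (DLab ((if h : emp then (∅ : Finset (List Bool)) else {[r]}) ∪
        (X.image (List.cons r) ∪ Y.image (List.cons (!r))))) =
      ((if h : emp then (∅ : Finset (List Bool)) else {[r]}) ∪
        (X.image (List.cons r) ∪ Y.image (List.cons (!r)))).card.choose Y.card *
        Nat.card (DLab X) * Nat.card (DLab Y) := by
  classical
  set optR : Finset (List Bool) := if h : emp then ∅ else {[r]} with hoptR
  have hrT : ∀ p : List Bool, p ∈ optR ∪ X.image (List.cons r) → ∃ t, p = r :: t := by
    intro p hp
    rcases Finset.mem_union.1 hp with h | h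
    · rw [hoptR] at h
      split_ifs at h with he
      · simp at h
      · rcases Finset.mem_singleton.1 h with rfl
        exact ⟨[], rfl⟩
    · rcases Finset.mem_image.1 h with ⟨q, _, rfl⟩
      exact ⟨q, rfl⟩
  have hrU : ∀ p : List Bool, p ∈ Y.image (List.cons (!r)) → ∃ t, p = (!r) :: t := by
    intro p hp
    rcases Finset.mem_image.1 hp with ⟨q, _, rfl⟩
    exact ⟨q, rfl⟩
  have hd : Disjoint (optR ∪ X.image (List.cons r)) (Y.image (List.cons (!r))) := by
    rw [Finset.disjoint_left]
    intro p hp hq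
    rcases hrT p hp with ⟨t, rfl⟩
    rcases hrU _ hq with ⟨s, hs⟩
    have : r = !r := by injection hs
    simp at this
  have hcross : ∀ p ∈ optR ∪ X.image (List.cons r), ∀ q ∈ Y.image (List.cons (!r)),
      ¬ p <+: q ∧ ¬ q <+: p := by
    intro p hp q hq
    rcases hrT p hp with ⟨t, rfl⟩
    rcases hrU q hq with ⟨s, rfl⟩
    constructor
    · intro h
      have := (List.cons_prefix_cons.1 h).1
      simp at this
    · intro h
      have := (List.cons_prefix_cons.1 h).1
      simp at this
  rw [← Finset.union_assoc]
  rw [card_DLab_union _ _ hd hcross, Finset.union_assoc]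
  have hYcard : (Y.image (List.cons (!r))).card = Y.card :=
    Finset.card_image_of_injective _ List.cons_injective
  rw [hYcard]
  have hT : Nat.card (DLab (optR ∪ X.image (List.cons r))) = Nat.card (DLab X) := by
    by_cases he : emp
    · rw [hoptR, dif_pos he, hX he]
      simp
    · rw [hoptR, dif_neg he]
      have hins : ({[r]} : Finset (List Bool)) ∪ X.image (List.cons r) =
          insert [r] (X.image (List.cons r)) := by
        ext x; simp [or_comm]
      rw [hins]
      have hnotmem : [r] ∉ X.image (List.cons r) := by
        intro h
        rcases Finset.mem_image.1 h with ⟨q, hq, hq2⟩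
        have : q = [] := by injection hq2
        exact hXne q hq this
      rw [card_DLab_insert_root _ _ hnotmem ?_, card_DLab_image _ List.cons_injective
        (cons_pref_iff r) X]
      intro q hq
      rcases Finset.mem_image.1 hq with ⟨t, ht, rfl⟩
      constructor
      · rw [List.cons_prefix_cons]
        exact ⟨rfl, List.nil_prefix⟩
      · intro h
        have : [] = t := by injection h
        exact hXne t ht this.symm
  rw [hT]
  rw [card_DLab_image _ List.cons_injective (cons_pref_iff (!r)) Y]

lemma card_DLab_leftPos_node (L R : BT) :
    Nat.card (DLab (leftPos (node L R))) =
      ((leftPos (node L R)).card.choose (leftPos R).card) *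
        Nat.card (DLab (leftPos L)) * Nat.card (DLab (leftPos R)) := by
  have key := card_DLab_sided false (L = leaf) (leftPos L) (leftPos R)
    (fun h => by rw [h]; rfl) (fun p hp => mem_leftPos_ne_nil hp)
    (fun p hp => mem_leftPos_ne_nil hp)
  have hif : (if h : L = leaf then (∅ : Finset (List Bool)) else {[false]}) =
      (if L = leaf then (∅ : Finset (List Bool)) else {[false]}) := by
    split_ifs <;> rfl
  rw [hif] at key
  simp only [Bool.not_false] at key
  rw [← leftPos_node] at key
  exact key

lemma card_DLab_rightPos_node (L R : BT) :
    Nat.card (DLab (rightPos (node L R))) =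
      ((rightPos (node L R)).card.choose (rightPos L).card) *
        Nat.card (DLab (rightPos R)) * Nat.card (DLab (rightPos L)) := by
  have key := card_DLab_sided true (R = leaf) (rightPos R) (rightPos L)
    (fun h => by rw [h]; rfl) (fun p hp => mem_rightPos_ne_nil hp)
    (fun p hp => mem_rightPos_ne_nil hp)
  have hif : (if h : R = leaf then (∅ : Finset (List Bool)) else {[true]}) =
      (if R = leaf then (∅ : Finset (List Bool)) else {[true]}) := by
    split_ifs <;> rfl
  rw [hif] at key
  simp only [Bool.not_true] at key
  rw [← rightPos_node] at key
  exact key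

/-- The key multiplicative formula for counting NATs of a composite shape. -/
lemma card_NAT_node (L R : BT) :
    Nat.card (NAT (node L R)) =
      ((leftPos (node L R)).card.choose (leftPos R).card) *
      ((rightPos (node L R)).card.choose (rightPos L).card) *
      Nat.card (NAT L) * Nat.card (NAT R) := by
  rw [card_NAT_eq, card_DLab_leftPos_node, card_DLab_rightPos_node,
    card_NAT_eq L, card_NAT_eq R]
  ring

@[simp] lemma card_NAT_leaf : Nat.card (NAT leaf) = 1 := by
  rw [card_NAT_eq]
  simp only [leftPos_leaf, rightPos_leaf, card_DLab_empty]

end Trees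

namespace BT

def size : BT → ℕ
  | leaf => 0
  | node l r => l.size + r.size + 1

@[simp] lemma size_leaf : size leaf = 0 := rfl
@[simp] lemma size_node (l r : BT) : size (node l r) = l.size + r.size + 1 := rfl

lemma size_eq_zero {B : BT} : size B = 0 ↔ B = leaf := by
  cases B <;> simp [size]

lemma card_singleton_union {a : List Bool} {s : Finset (List Bool)} (h : a ∉ s) :
    ({a} ∪ s).card = s.card + 1 := by
  classical
  have : ({a} : Finset (List Bool)) ∪ s = insert a s := by ext x; simp [or_comm]
  rw [this, Finset.card_insert_of_notMem h]

lemma card_leftPos_node (L R : BT) :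
    (leftPos (node L R)).card =
      (if L = leaf then 0 else 1) + (leftPos L).card + (leftPos R).card := by
  classical
  rw [leftPos_node]
  have himgcard : ∀ (b : Bool) (s : Finset (List Bool)),
      (s.image (List.cons b)).card = s.card :=
    fun b s => Finset.card_image_of_injective _ List.cons_injective
  have hdisj : Disjoint ((leftPos L).image (List.cons false))
      ((leftPos R).image (List.cons true)) := by
    rw [Finset.disjoint_left]
    intro p hp hq
    rcases Finset.mem_image.1 hp with ⟨q, _, rfl⟩
    rcases Finset.mem_image.1 hq with ⟨q', _, h⟩
    have : (true : Bool) = false := by injection h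
    simp at this
  have hucard : ((leftPos L).image (List.cons false) ∪ (leftPos R).image (List.cons true)).card
      = (leftPos L).card + (leftPos R).card := by
    rw [Finset.card_union_of_disjoint hdisj, himgcard, himgcard]
  by_cases hL : L = leaf
  · rw [if_pos hL, if_pos hL]
    simp only [Finset.empty_union, hucard]
    omega
  · rw [if_neg hL, if_neg hL]
    have hnot : [false] ∉ (leftPos L).image (List.cons false) ∪
        (leftPos R).image (List.cons true) := by
      intro h
      rcases Finset.mem_union.1 h with h | h
      · rcases Finset.mem_image.1 h with ⟨q, hq, h2⟩
        have : q = [] := by injection h2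
        exact mem_leftPos_ne_nil hq this
      · rcases Finset.mem_image.1 h with ⟨q, hq, h2⟩
        have : (true : Bool) = false := by injection h2
        simp at this
    rw [card_singleton_union hnot, hucard]
    omega

lemma card_rightPos_node (L R : BT) :
    (rightPos (node L R)).card =
      (if R = leaf then 0 else 1) + (rightPos L).card + (rightPos R).card := by
  classical
  rw [rightPos_node]
  have himgcard : ∀ (b : Bool) (s : Finset (List Bool)),
      (s.image (List.cons b)).card = s.card :=
    fun b s => Finset.card_image_of_injective _ List.cons_injective
  have hdisj : Disjoint ((rightPos R).image (List.cons true))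
      ((rightPos L).image (List.cons false)) := by
    rw [Finset.disjoint_left]
    intro p hp hq
    rcases Finset.mem_image.1 hp with ⟨q, _, rfl⟩
    rcases Finset.mem_image.1 hq with ⟨q', _, h⟩
    have : (false : Bool) = true := by injection h
    simp at this
  have hucard : ((rightPos R).image (List.cons true) ∪ (rightPos L).image (List.cons false)).card
      = (rightPos R).card + (rightPos L).card := by
    rw [Finset.card_union_of_disjoint hdisj, himgcard, himgcard]
  by_cases hR : R = leaf
  · rw [if_pos hR, if_pos hR]
    simp only [Finset.empty_union, hucard]
    omega
  · rw [if_neg hR, if_neg hR]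
    have hnot : [true] ∉ (rightPos R).image (List.cons true) ∪
        (rightPos L).image (List.cons false) := by
      intro h
      rcases Finset.mem_union.1 h with h | h
      · rcases Finset.mem_image.1 h with ⟨q, hq, h2⟩
        have : q = [] := by injection h2
        exact mem_rightPos_ne_nil hq this
      · rcases Finset.mem_image.1 h with ⟨q, hq, h2⟩
        have : (false : Bool) = true := by injection h2
        simp at this
    rw [card_singleton_union hnot, hucard]
    omega

lemma size_spec (B : BT) :
    (leftPos B).card + (rightPos B).card + (if B = leaf then 0 else 1) = size B := by
  induction B with
  | leaf => simp
  | node L R ihL ihR =>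
    rw [card_leftPos_node, card_rightPos_node, size_node]
    have hne : node L R ≠ leaf := by simp
    rw [if_neg hne]
    by_cases hL : L = leaf <;> by_cases hR : R = leaf <;>
      simp [hL, hR] at ihL ihR ⊢ <;> omega

def treesUpTo : ℕ → Finset BT
  | 0 => {leaf}
  | n+1 => insert leaf (((treesUpTo n) ×ˢ (treesUpTo n)).image fun p => node p.1 p.2)

lemma mem_treesUpTo {B : BT} {n : ℕ} (h : B.size ≤ n) : B ∈ treesUpTo n := by
  induction n generalizing B with
  | zero =>
    have : B = leaf := size_eq_zero.1 (by omega)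
    rw [this]
    simp [treesUpTo]
  | succ n ih =>
    cases B with
    | leaf => simp [treesUpTo]
    | node l r =>
      rw [treesUpTo]
      have h1 : l.size ≤ n := by simp at h; omega
      have h2 : r.size ≤ n := by simp at h; omega
      exact Finset.mem_insert_of_mem
        (Finset.mem_image.2 ⟨(l, r), Finset.mem_product.2 ⟨ih h1, ih h2⟩, rfl⟩)

def shapes (l r : ℕ) : Finset BT :=
  (treesUpTo (l + r + 1)).filter
    (fun B => B ≠ leaf ∧ (leftPos B).card = l ∧ (rightPos B).card = r)

lemma mem_shapes {B : BT} {l r : ℕ} :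
    B ∈ shapes l r ↔ B ≠ leaf ∧ (leftPos B).card = l ∧ (rightPos B).card = r := by
  rw [shapes, Finset.mem_filter]
  constructor
  · exact fun h => h.2
  · intro h
    refine ⟨mem_treesUpTo ?_, h⟩
    have := size_spec B
    rw [if_neg h.1] at this
    omega

lemma filter_treesUpTo {l r N : ℕ} (h : l + r + 1 ≤ N) :
    (treesUpTo N).filter
        (fun B => B ≠ leaf ∧ (leftPos B).card = l ∧ (rightPos B).card = r) = shapes l r := by
  ext B
  rw [Finset.mem_filter, mem_shapes]
  constructor
  · exact fun h => h.2
  · intro hB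
    refine ⟨mem_treesUpTo ?_, hB⟩
    have := size_spec B
    rw [if_neg hB.1] at this
    omega

end BT

lemma natCount_left_zero (j : ℕ) : natCount 0 j = 0 := by
  rw [natCount]
  have : IsEmpty {T : Σ B : BT, NAT B //
      T.1 ≠ BT.leaf ∧ T.1.leftPos.card + 1 = 0 ∧ T.1.rightPos.card + 1 = j} := by
    constructor
    rintro ⟨T, -, h, -⟩
    omega
  exact Nat.card_of_isEmpty

lemma natCount_right_zero (i : ℕ) : natCount i 0 = 0 := by
  rw [natCount]
  have : IsEmpty {T : Σ B : BT, NAT B //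
      T.1 ≠ BT.leaf ∧ T.1.leftPos.card + 1 = i ∧ T.1.rightPos.card + 1 = 0} := by
    constructor
    rintro ⟨T, -, -, h⟩
    omega
  exact Nat.card_of_isEmpty

lemma natCount_succ_succ (l r : ℕ) :
    natCount (l+1) (r+1) = ∑ B ∈ BT.shapes l r, Nat.card (NAT B) := by
  classical
  rw [natCount]
  have e1 : {T : Σ B : BT, NAT B //
      T.1 ≠ BT.leaf ∧ T.1.leftPos.card + 1 = l + 1 ∧ T.1.rightPos.card + 1 = r + 1} ≃
      Σ B : {B : BT // B ∈ BT.shapes l r}, NAT B.1 :=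
    ⟨fun T => ⟨⟨T.1.1, BT.mem_shapes.2 ⟨T.2.1, by omega, by omega⟩⟩, T.1.2⟩,
     fun p => ⟨⟨p.1.1, p.2⟩, by
       obtain ⟨h1, h2, h3⟩ := BT.mem_shapes.1 p.1.2
       exact ⟨h1, congrArg (· + 1) h2, congrArg (· + 1) h3⟩⟩,
     fun T => rfl, fun p => rfl⟩
  rw [Nat.card_congr e1, Nat.card_eq_fintype_card, Fintype.card_sigma]
  rw [← Finset.sum_coe_sort (BT.shapes l r) (fun B => Nat.card (NAT B))]
  apply Finset.sum_congr rfl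
  intro B _
  rw [Nat.card_eq_fintype_card]

@[simp] lemma fintype_card_NAT_leaf : Fintype.card (NAT BT.leaf) = 1 := by
  rw [← Nat.card_eq_fintype_card]
  exact card_NAT_leaf

open BT in
lemma natCount_rec (i j : ℕ) :
    natCount (i+1) (j+1) =
      (if i = 0 ∧ j = 0 then 1 else 0) + natCount i (j+1) + natCount (i+1) j +
        ∑ a ∈ Finset.range (i+1), ∑ b ∈ Finset.range (j+1),
          i.choose a * j.choose b * natCount a (b+1) * natCount (i-a+1) (j-b) := by
  classical
  set N := i + j + 1 with hN
  set pairs : Finset (BT × BT) := (treesUpTo N ×ˢ treesUpTo N).filter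
    (fun p => (leftPos (node p.1 p.2)).card = i ∧ (rightPos (node p.1 p.2)).card = j)
    with hpairs
  set F : BT × BT → ℕ := fun p => i.choose (leftPos p.2).card * j.choose (rightPos p.1).card *
    Nat.card (NAT p.1) * Nat.card (NAT p.2) with hF
  have hmempairs : ∀ p : BT × BT, p ∈ pairs ↔
      (p.1 ∈ treesUpTo N ∧ p.2 ∈ treesUpTo N) ∧
        (leftPos (node p.1 p.2)).card = i ∧ (rightPos (node p.1 p.2)).card = j := by
    intro p
    rw [hpairs, Finset.mem_filter, Finset.mem_product]
  have himg : shapes i j = pairs.image (fun p => node p.1 p.2) := by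
    ext B
    rw [mem_shapes]
    constructor
    · rintro ⟨hne, hl, hr⟩
      cases B with
      | leaf => exact absurd rfl hne
      | node L R =>
        apply Finset.mem_image.2
        have hneq : node L R ≠ leaf := by simp
        have hsz := size_spec (node L R)
        rw [if_neg hneq, hl, hr, size_node] at hsz
        refine ⟨(L, R), (hmempairs (L, R)).2 ⟨⟨?_, ?_⟩, hl, hr⟩, rfl⟩
        · exact mem_treesUpTo (show L.size ≤ N from by omega)
        · exact mem_treesUpTo (show R.size ≤ N from by omega)
    · intro hB
      rcases Finset.mem_image.1 hB with ⟨p, hp, rfl⟩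
      rcases (hmempairs p).1 hp with ⟨-, h1, h2⟩
      exact ⟨by simp, h1, h2⟩
  have hstep1 : natCount (i+1) (j+1) = ∑ p ∈ pairs, F p := by
    rw [natCount_succ_succ, himg, Finset.sum_image (by
      intro p hp q hq h
      injection h with h1 h2
      exact Prod.ext h1 h2)]
    apply Finset.sum_congr rfl
    intro p hp
    rcases (hmempairs p).1 hp with ⟨-, h1, h2⟩
    rw [card_NAT_node, h1, h2, hF]
  have hsplit : ∑ p ∈ pairs, F p =
      ((∑ p ∈ (pairs.filter (fun p => p.1 = leaf)).filter (fun p => p.2 = leaf), F p) +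
       (∑ p ∈ (pairs.filter (fun p => p.1 = leaf)).filter (fun p => ¬ p.2 = leaf), F p)) +
      ((∑ p ∈ (pairs.filter (fun p => ¬ p.1 = leaf)).filter (fun p => p.2 = leaf), F p) +
       (∑ p ∈ (pairs.filter (fun p => ¬ p.1 = leaf)).filter (fun p => ¬ p.2 = leaf), F p)) := by
    rw [Finset.sum_filter_add_sum_filter_not ((pairs.filter (fun p => p.1 = leaf)))
      (fun p => p.2 = leaf) F]
    rw [Finset.sum_filter_add_sum_filter_not ((pairs.filter (fun p => ¬ p.1 = leaf)))
      (fun p => p.2 = leaf) F]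
    rw [Finset.sum_filter_add_sum_filter_not pairs (fun p => p.1 = leaf) F]
  -- part A
  have hA : ∑ p ∈ (pairs.filter (fun p => p.1 = leaf)).filter (fun p => p.2 = leaf), F p =
      (if i = 0 ∧ j = 0 then 1 else 0) := by
    have hAset : (pairs.filter (fun p => p.1 = leaf)).filter (fun p => p.2 = leaf) =
        if i = 0 ∧ j = 0 then {((leaf : BT), (leaf : BT))} else ∅ := by
      ext p
      rw [Finset.mem_filter, Finset.mem_filter]
      constructor
      · rintro ⟨⟨hp, hp1⟩, hp2⟩
        rcases (hmempairs p).1 hp with ⟨-, h1, h2⟩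
        have hpeq : p = (leaf, leaf) := Prod.ext hp1 hp2
        rw [hpeq] at h1 h2
        rw [card_leftPos_node] at h1
        rw [card_rightPos_node] at h2
        simp at h1 h2
        rw [if_pos ⟨by omega, by omega⟩, hpeq]
        exact Finset.mem_singleton_self _
      · intro hp
        split_ifs at hp with hij
        · rcases Finset.mem_singleton.1 hp with rfl
          refine ⟨⟨(hmempairs _).2 ⟨⟨mem_treesUpTo (by simp), mem_treesUpTo (by simp)⟩, ?_, ?_⟩,
            rfl⟩, rfl⟩
          · rw [card_leftPos_node]
            simp [hij.1]
          · rw [card_rightPos_node]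
            simp [hij.2]
        · simp at hp
    rw [hAset]
    split_ifs with hij
    · rw [Finset.sum_singleton]
      simp only [hF]
      simp
    · simp
  -- part B : p.1 = leaf, p.2 ≠ leaf ⟶ natCount (i+1) j
  have hB : ∑ p ∈ (pairs.filter (fun p => p.1 = leaf)).filter (fun p => ¬ p.2 = leaf), F p =
      natCount (i+1) j := by
    by_cases hj : j = 0
    · rw [hj, natCount_right_zero]
      have hempty : (pairs.filter (fun p => p.1 = leaf)).filter (fun p => ¬ p.2 = leaf) = ∅ := by
        ext p
        simp only [Finset.notMem_empty, iff_false, Finset.mem_filter, not_and]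
        rintro ⟨hp, hp1⟩ hp2
        rcases (hmempairs p).1 hp with ⟨-, -, h2⟩
        rw [card_rightPos_node, if_neg hp2] at h2
        omega
      rw [hempty, Finset.sum_empty]
    · have hBset : (pairs.filter (fun p => p.1 = leaf)).filter (fun p => ¬ p.2 = leaf) =
          ({(leaf : BT)} : Finset BT) ×ˢ shapes i (j - 1) := by
        ext p
        rw [Finset.mem_filter, Finset.mem_filter, Finset.mem_product, Finset.mem_singleton,
          mem_shapes]
        constructor
        · rintro ⟨⟨hp, hp1⟩, hp2⟩
          rcases (hmempairs p).1 hp with ⟨-, h1, h2⟩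
          rw [card_leftPos_node, if_pos hp1, hp1] at h1
          rw [card_rightPos_node, if_neg hp2, hp1] at h2
          simp only [leftPos_leaf, rightPos_leaf, Finset.card_empty] at h1 h2
          exact ⟨hp1, hp2, by omega, by omega⟩
        · rintro ⟨hp1, hne, hl, hr⟩
          have hsz := size_spec p.2
          rw [if_neg hne, hl, hr] at hsz
          refine ⟨⟨(hmempairs p).2 ⟨⟨?_, mem_treesUpTo (by omega)⟩, ?_, ?_⟩, hp1⟩, hne⟩
          · rw [hp1]; exact mem_treesUpTo (by simp)
          · rw [card_leftPos_node, if_pos hp1, hp1]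
            simp only [leftPos_leaf, Finset.card_empty]
            omega
          · rw [card_rightPos_node, if_neg hne, hp1]
            simp only [rightPos_leaf, Finset.card_empty]
            omega
      have hxx : natCount (i+1) j = ∑ B ∈ shapes i (j-1), Nat.card (NAT B) := by
        have h1 : natCount (i+1) j = natCount (i+1) ((j-1)+1) := by
          congr 1
          omega
        rw [h1, natCount_succ_succ]
      rw [hBset, Finset.sum_product, Finset.sum_singleton, hxx]
      apply Finset.sum_congr rfl
      intro B hBm
      rcases mem_shapes.1 hBm with ⟨-, hl, -⟩
      simp only [hF]
      simp [hl]
  -- part C : p.1 ≠ leaf, p.2 = leaf ⟶ natCount i (j+1)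
  have hC : ∑ p ∈ (pairs.filter (fun p => ¬ p.1 = leaf)).filter (fun p => p.2 = leaf), F p =
      natCount i (j+1) := by
    by_cases hi : i = 0
    · rw [hi, natCount_left_zero]
      have hempty : (pairs.filter (fun p => ¬ p.1 = leaf)).filter (fun p => p.2 = leaf) = ∅ := by
        ext p
        simp only [Finset.notMem_empty, iff_false, Finset.mem_filter, not_and]
        rintro ⟨hp, hp1⟩ _
        rcases (hmempairs p).1 hp with ⟨-, h1, -⟩
        rw [card_leftPos_node, if_neg hp1] at h1
        omega
      rw [hempty, Finset.sum_empty]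
    · have hCset : (pairs.filter (fun p => ¬ p.1 = leaf)).filter (fun p => p.2 = leaf) =
          shapes (i - 1) j ×ˢ ({(leaf : BT)} : Finset BT) := by
        ext p
        rw [Finset.mem_filter, Finset.mem_filter, Finset.mem_product, Finset.mem_singleton,
          mem_shapes]
        constructor
        · rintro ⟨⟨hp, hp1⟩, hp2⟩
          rcases (hmempairs p).1 hp with ⟨-, h1, h2⟩
          rw [card_leftPos_node, if_neg hp1, hp2] at h1
          rw [card_rightPos_node, if_pos hp2, hp2] at h2
          simp only [leftPos_leaf, rightPos_leaf, Finset.card_empty] at h1 h2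
          exact ⟨⟨hp1, by omega, by omega⟩, hp2⟩
        · rintro ⟨⟨hne, hl, hr⟩, hp2⟩
          have hsz := size_spec p.1
          rw [if_neg hne, hl, hr] at hsz
          refine ⟨⟨(hmempairs p).2 ⟨⟨mem_treesUpTo (by omega), ?_⟩, ?_, ?_⟩, hne⟩, hp2⟩
          · rw [hp2]; exact mem_treesUpTo (by simp)
          · rw [card_leftPos_node, if_neg hne, hp2]
            simp only [leftPos_leaf, Finset.card_empty]
            omega
          · rw [card_rightPos_node, if_pos hp2, hp2]
            simp only [rightPos_leaf, Finset.card_empty]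
            omega
      have hxx : natCount i (j+1) = ∑ B ∈ shapes (i-1) j, Nat.card (NAT B) := by
        have h1 : natCount i (j+1) = natCount ((i-1)+1) (j+1) := by
          congr 1
          omega
        rw [h1, natCount_succ_succ]
      rw [hCset, Finset.sum_product, hxx]
      simp only [Finset.sum_singleton]
      apply Finset.sum_congr rfl
      intro B hBm
      rcases mem_shapes.1 hBm with ⟨-, -, hr⟩
      simp only [hF]
      simp [hr]
  -- part D : both nonleaf
  have hD : ∑ p ∈ (pairs.filter (fun p => ¬ p.1 = leaf)).filter (fun p => ¬ p.2 = leaf), F p =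
      ∑ a ∈ Finset.range (i+1), ∑ b ∈ Finset.range (j+1),
        i.choose a * j.choose b * natCount a (b+1) * natCount (i-a+1) (j-b) := by
    set Dset := (pairs.filter (fun p => ¬ p.1 = leaf)).filter (fun p => ¬ p.2 = leaf) with hDset
    have hmemD : ∀ p : BT × BT, p ∈ Dset ↔ p ∈ pairs ∧ ¬ p.1 = leaf ∧ ¬ p.2 = leaf := by
      intro p
      rw [hDset, Finset.mem_filter, Finset.mem_filter, and_assoc]
    have hmapsTo : ∀ p ∈ Dset, (((leftPos p.1).card + 1, (rightPos p.1).card) : ℕ × ℕ) ∈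
        Finset.range (i+1) ×ˢ Finset.range (j+1) := by
      intro p hp
      rcases (hmemD p).1 hp with ⟨hp0, hp1, hp2⟩
      rcases (hmempairs p).1 hp0 with ⟨-, h1, h2⟩
      rw [card_leftPos_node, if_neg hp1] at h1
      rw [card_rightPos_node, if_neg hp2] at h2
      rw [Finset.mem_product, Finset.mem_range, Finset.mem_range]
      omega
    rw [← Finset.sum_fiberwise_of_maps_to hmapsTo F, Finset.sum_product]
    apply Finset.sum_congr rfl
    intro a ha
    apply Finset.sum_congr rfl
    intro b hb
    rw [Finset.mem_range] at ha hb
    by_cases ha0 : a = 0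
    · have hempty : Dset.filter
          (fun p => (((leftPos p.1).card + 1, (rightPos p.1).card) : ℕ × ℕ) = (a, b)) = ∅ := by
        ext p
        simp only [Finset.notMem_empty, iff_false, Finset.mem_filter, not_and]
        intro _ heq
        have h1 : (leftPos p.1).card + 1 = a := congrArg Prod.fst heq
        omega
      rw [hempty, Finset.sum_empty, ha0, natCount_left_zero]
      ring
    · by_cases hbj : b = j
      · have hempty : Dset.filter
            (fun p => (((leftPos p.1).card + 1, (rightPos p.1).card) : ℕ × ℕ) = (a, b)) = ∅ := by
          ext p
          simp only [Finset.notMem_empty, iff_false, Finset.mem_filter, not_and]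
          intro hp heq
          rcases (hmemD p).1 hp with ⟨hp0, hp1, hp2⟩
          rcases (hmempairs p).1 hp0 with ⟨-, -, h2⟩
          rw [card_rightPos_node, if_neg hp2] at h2
          have he2 : (rightPos p.1).card = b := congrArg Prod.snd heq
          omega
        rw [hempty, Finset.sum_empty, hbj, Nat.sub_self, natCount_right_zero]
        ring
      · -- main case
        have hset : Dset.filter
            (fun p => (((leftPos p.1).card + 1, (rightPos p.1).card) : ℕ × ℕ) = (a, b)) =
            shapes (a-1) b ×ˢ shapes (i-a) (j-1-b) := by
          ext p
          rw [Finset.mem_filter, Finset.mem_product, mem_shapes, mem_shapes]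
          constructor
          · rintro ⟨hp, heq⟩
            rcases (hmemD p).1 hp with ⟨hp0, hp1, hp2⟩
            rcases (hmempairs p).1 hp0 with ⟨-, h1, h2⟩
            rw [card_leftPos_node, if_neg hp1] at h1
            rw [card_rightPos_node, if_neg hp2] at h2
            have he1 : (leftPos p.1).card + 1 = a := congrArg Prod.fst heq
            have he2 : (rightPos p.1).card = b := congrArg Prod.snd heq
            exact ⟨⟨hp1, by omega, by omega⟩, ⟨hp2, by omega, by omega⟩⟩
          · rintro ⟨⟨hne1, hl1, hr1⟩, ⟨hne2, hl2, hr2⟩⟩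
            have hsz1 := size_spec p.1
            rw [if_neg hne1, hl1, hr1] at hsz1
            have hsz2 := size_spec p.2
            rw [if_neg hne2, hl2, hr2] at hsz2
            refine ⟨(hmemD p).2 ⟨(hmempairs p).2
              ⟨⟨mem_treesUpTo (by omega), mem_treesUpTo (by omega)⟩, ?_, ?_⟩, hne1, hne2⟩, ?_⟩
            · rw [card_leftPos_node, if_neg hne1]
              omega
            · rw [card_rightPos_node, if_neg hne2]
              omega
            · rw [hl1, hr1]
              exact Prod.ext (by omega) (by omega)
        rw [hset]
        have hcongr : ∀ p ∈ shapes (a-1) b ×ˢ shapes (i-a) (j-1-b),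
            F p = (i.choose a * j.choose b) * (Nat.card (NAT p.1) * Nat.card (NAT p.2)) := by
          intro p hp
          rcases Finset.mem_product.1 hp with ⟨hp1, hp2⟩
          rcases mem_shapes.1 hp1 with ⟨-, -, hr1⟩
          rcases mem_shapes.1 hp2 with ⟨-, hl2, -⟩
          simp only [hF]
          rw [hl2, hr1, Nat.choose_symm (show a ≤ i by omega)]
          ring
        rw [Finset.sum_congr rfl hcongr, Finset.sum_product]
        simp only [← Finset.mul_sum]
        rw [← Finset.sum_mul]
        have hs1 : ∑ x ∈ shapes (a-1) b, Nat.card (NAT x) = natCount a (b+1) := by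
          rw [← natCount_succ_succ]
          congr 1
          omega
        have hs2 : ∑ y ∈ shapes (i-a) (j-1-b), Nat.card (NAT y) = natCount (i-a+1) (j-b) := by
          have he : j - 1 - b + 1 = j - b := by omega
          rw [← he, ← natCount_succ_succ]
        rw [hs1, hs2]
        ring
  rw [hstep1, hsplit, hA, hB, hC, hD]
  ring

section Series

/-- The finsupp on `Fin 2` with values `a, b`. -/
noncomputable def fs (a b : ℕ) : Fin 2 →₀ ℕ := Finsupp.single 0 a + Finsupp.single 1 b

@[simp] lemma fs_apply0 (a b : ℕ) : fs a b 0 = a := by simp [fs]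
@[simp] lemma fs_apply1 (a b : ℕ) : fs a b 1 = b := by simp [fs]

lemma eq_fs (d : Fin 2 →₀ ℕ) : d = fs (d 0) (d 1) := by
  ext x; fin_cases x <;> simp [fs]

lemma finsupp_eq_zero_iff (d : Fin 2 →₀ ℕ) : d = 0 ↔ d 0 = 0 ∧ d 1 = 0 := by
  constructor
  · rintro rfl; simp
  · intro h; ext x; fin_cases x <;> simp [h.1, h.2]

lemma qfact_ne_zero (n : ℕ) : ((n.factorial : ℚ)) ≠ 0 :=
  Nat.cast_ne_zero.2 (Nat.factorial_ne_zero n)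

lemma sum_antidiagonal_fin2 (d : Fin 2 →₀ ℕ) (f : (Fin 2 →₀ ℕ) → (Fin 2 →₀ ℕ) → ℚ) :
    ∑ p ∈ Finset.HasAntidiagonal.antidiagonal d, f p.1 p.2 =
      ∑ a ∈ Finset.range (d 0 + 1), ∑ b ∈ Finset.range (d 1 + 1),
        f (fs a b) (fs (d 0 - a) (d 1 - b)) := by
  rw [← Finset.sum_product']
  apply Finset.sum_nbij' (i := fun p : (Fin 2 →₀ ℕ) × (Fin 2 →₀ ℕ) => (p.1 0, p.1 1))
    (j := fun x : ℕ × ℕ => (fs x.1 x.2, fs (d 0 - x.1) (d 1 - x.2)))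
  · intro p hp
    have hsum := Finset.HasAntidiagonal.mem_antidiagonal.1 hp
    have h0 := DFunLike.congr_fun hsum (0 : Fin 2)
    have h1 := DFunLike.congr_fun hsum (1 : Fin 2)
    rw [Finsupp.add_apply] at h0 h1
    rw [Finset.mem_product, Finset.mem_range, Finset.mem_range]
    constructor <;> omega
  · intro x hx
    rw [Finset.mem_product, Finset.mem_range, Finset.mem_range] at hx
    rw [Finset.HasAntidiagonal.mem_antidiagonal]
    ext t
    rw [Finsupp.add_apply]
    fin_cases t <;> simp <;> omega
  · intro p hp
    have hsum := Finset.HasAntidiagonal.mem_antidiagonal.1 hp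
    have h0 := DFunLike.congr_fun hsum (0 : Fin 2)
    have h1 := DFunLike.congr_fun hsum (1 : Fin 2)
    rw [Finsupp.add_apply] at h0 h1
    refine Prod.ext (eq_fs p.1).symm ?_
    show fs (d 0 - p.1 0) (d 1 - p.1 1) = p.2
    ext t
    fin_cases t <;> simp <;> omega
  · intro x hx
    refine Prod.ext ?_ ?_ <;> simp
  · intro p hp
    have h1 : fs (p.1 0) (p.1 1) = p.1 := (eq_fs p.1).symm
    have hsum := Finset.HasAntidiagonal.mem_antidiagonal.1 hp
    have h0 := DFunLike.congr_fun hsum (0 : Fin 2)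
    have h1' := DFunLike.congr_fun hsum (1 : Fin 2)
    rw [Finsupp.add_apply] at h0 h1'
    have h2 : fs (d 0 - p.1 0) (d 1 - p.1 1) = p.2 := by
      ext t
      fin_cases t <;> simp <;> omega
    rw [h1, h2]

lemma one_mvps_apply (e : Fin 2 →₀ ℕ) :
    (1 : MvPowerSeries (Fin 2) ℚ) e = if e 0 = 0 ∧ e 1 = 0 then 1 else 0 := by
  have h : (1 : MvPowerSeries (Fin 2) ℚ) e = MvPowerSeries.coeff e 1 := rfl
  rw [h, MvPowerSeries.coeff_one]
  by_cases h2 : e 0 = 0 ∧ e 1 = 0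
  · rw [if_pos ((finsupp_eq_zero_iff e).2 h2), if_pos h2]
  · rw [if_neg (fun h3 => h2 ((finsupp_eq_zero_iff e).1 h3)), if_neg h2]

lemma iX_GFN_apply (a b : ℕ) :
    iX GFN (fs a b) = (natCount a (b+1) : ℚ) / (a.factorial * b.factorial) := by
  simp only [iX]
  rcases Nat.eq_zero_or_pos a with ha | ha
  · subst ha
    rw [if_pos (by simp), natCount_left_zero]
    simp
  · obtain ⟨k, rfl⟩ : ∃ k, a = k + 1 := ⟨a - 1, by omega⟩
    rw [if_neg (by simp)]
    have h1 : GFN (fs (k+1) b - Finsupp.single 0 1) =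
        (natCount (k+1) (b+1) : ℚ) / (k.factorial * b.factorial) := by
      simp only [GFN]
      have e0 : ((fs (k+1) b - Finsupp.single 0 1 : Fin 2 →₀ ℕ)) 0 = k := by
        rw [Finsupp.tsub_apply]; simp
      have e1 : ((fs (k+1) b - Finsupp.single 0 1 : Fin 2 →₀ ℕ)) 1 = b := by
        rw [Finsupp.tsub_apply]; simp
      rw [e0, e1]
    rw [h1]
    simp only [fs_apply0]
    rw [Nat.factorial_succ]
    have hk : ((k:ℚ)+1) ≠ 0 := by positivity
    have h2 := qfact_ne_zero k
    have h3 := qfact_ne_zero b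
    field_simp
    push_cast
    ring

lemma iY_GFN_apply (c e : ℕ) :
    iY GFN (fs c e) = (natCount (c+1) e : ℚ) / (c.factorial * e.factorial) := by
  simp only [iY]
  rcases Nat.eq_zero_or_pos e with he | he
  · subst he
    rw [if_pos (by simp), natCount_right_zero]
    simp
  · obtain ⟨k, rfl⟩ : ∃ k, e = k + 1 := ⟨e - 1, by omega⟩
    rw [if_neg (by simp)]
    have h1 : GFN (fs c (k+1) - Finsupp.single 1 1) =
        (natCount (c+1) (k+1) : ℚ) / (c.factorial * k.factorial) := by
      simp only [GFN]
      have e0 : ((fs c (k+1) - Finsupp.single 1 1 : Fin 2 →₀ ℕ)) 0 = c := by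
        rw [Finsupp.tsub_apply]; simp
      have e1 : ((fs c (k+1) - Finsupp.single 1 1 : Fin 2 →₀ ℕ)) 1 = k := by
        rw [Finsupp.tsub_apply]; simp
      rw [e0, e1]
    rw [h1]
    simp only [fs_apply1]
    rw [Nat.factorial_succ]
    have hk : ((k:ℚ)+1) ≠ 0 := by positivity
    have h2 := qfact_ne_zero k
    have h3 := qfact_ne_zero c
    field_simp
    push_cast
    ring

lemma one_add_iX_apply (a b : ℕ) :
    (1 + iX GFN) (fs a b) =
      (if a = 0 ∧ b = 0 then (1:ℚ) else 0) +
        (natCount a (b+1) : ℚ) / (a.factorial * b.factorial) := by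
  have h : (1 + iX GFN) (fs a b) = (1 : MvPowerSeries (Fin 2) ℚ) (fs a b) + iX GFN (fs a b) := rfl
  rw [h, one_mvps_apply, iX_GFN_apply]
  simp

lemma one_add_iY_apply (c e : ℕ) :
    (1 + iY GFN) (fs c e) =
      (if c = 0 ∧ e = 0 then (1:ℚ) else 0) +
        (natCount (c+1) e : ℚ) / (c.factorial * e.factorial) := by
  have h : (1 + iY GFN) (fs c e) = (1 : MvPowerSeries (Fin 2) ℚ) (fs c e) + iY GFN (fs c e) := rfl
  rw [h, one_mvps_apply, iY_GFN_apply]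
  simp

lemma key_sum (i j : ℕ) :
    (natCount (i+1) (j+1) : ℚ) / (i.factorial * j.factorial) =
      ∑ a ∈ Finset.range (i+1), ∑ b ∈ Finset.range (j+1),
        (((if a = 0 ∧ b = 0 then (1:ℚ) else 0) +
            (natCount a (b+1) : ℚ) / (a.factorial * b.factorial)) *
         ((if i-a = 0 ∧ j-b = 0 then (1:ℚ) else 0) +
            (natCount (i-a+1) (j-b) : ℚ) / ((i-a).factorial * (j-b).factorial))) := by
  have hsplit : ∀ a b : ℕ,
      (((if a = 0 ∧ b = 0 then (1:ℚ) else 0) +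
          (natCount a (b+1) : ℚ) / (a.factorial * b.factorial)) *
       ((if i-a = 0 ∧ j-b = 0 then (1:ℚ) else 0) +
          (natCount (i-a+1) (j-b) : ℚ) / ((i-a).factorial * (j-b).factorial))) =
      ((if a = 0 ∧ b = 0 then (1:ℚ) else 0) * (if i-a = 0 ∧ j-b = 0 then (1:ℚ) else 0)) +
      (((if a = 0 ∧ b = 0 then (1:ℚ) else 0) *
          ((natCount (i-a+1) (j-b) : ℚ) / ((i-a).factorial * (j-b).factorial))) +
      ((((natCount a (b+1) : ℚ) / (a.factorial * b.factorial)) *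
          (if i-a = 0 ∧ j-b = 0 then (1:ℚ) else 0)) +
       (((natCount a (b+1) : ℚ) / (a.factorial * b.factorial)) *
          ((natCount (i-a+1) (j-b) : ℚ) / ((i-a).factorial * (j-b).factorial))))) :=
    fun a b => by ring
  rw [Finset.sum_congr rfl (fun a _ => Finset.sum_congr rfl (fun b _ => hsplit a b))]
  simp only [Finset.sum_add_distrib]
  have S1 : ∑ a ∈ Finset.range (i+1), ∑ b ∈ Finset.range (j+1),
      ((if a = 0 ∧ b = 0 then (1:ℚ) else 0) * (if i-a = 0 ∧ j-b = 0 then (1:ℚ) else 0)) =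
      (if i = 0 ∧ j = 0 then (1:ℚ) else 0) := by
    rw [Finset.sum_eq_single_of_mem 0 (Finset.mem_range.2 (by omega))]
    · rw [Finset.sum_eq_single_of_mem 0 (Finset.mem_range.2 (by omega))]
      · simp
      · intro b _ hbne
        simp [hbne]
    · intro a _ hane
      apply Finset.sum_eq_zero
      intro b _
      simp [hane]
  have S2 : ∑ a ∈ Finset.range (i+1), ∑ b ∈ Finset.range (j+1),
      ((if a = 0 ∧ b = 0 then (1:ℚ) else 0) *
        ((natCount (i-a+1) (j-b) : ℚ) / ((i-a).factorial * (j-b).factorial))) =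
      (natCount (i+1) j : ℚ) / (i.factorial * j.factorial) := by
    rw [Finset.sum_eq_single_of_mem 0 (Finset.mem_range.2 (by omega))]
    · rw [Finset.sum_eq_single_of_mem 0 (Finset.mem_range.2 (by omega))]
      · simp
      · intro b _ hbne
        simp [hbne]
    · intro a _ hane
      apply Finset.sum_eq_zero
      intro b _
      simp [hane]
  have S3 : ∑ a ∈ Finset.range (i+1), ∑ b ∈ Finset.range (j+1),
      ((((natCount a (b+1) : ℚ) / (a.factorial * b.factorial)) *
        (if i-a = 0 ∧ j-b = 0 then (1:ℚ) else 0))) =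
      (natCount i (j+1) : ℚ) / (i.factorial * j.factorial) := by
    rw [Finset.sum_eq_single_of_mem i (Finset.mem_range.2 (by omega))]
    · rw [Finset.sum_eq_single_of_mem j (Finset.mem_range.2 (by omega))]
      · simp
      · intro b hb hbne
        rw [Finset.mem_range] at hb
        have hjb : ¬ (j - b = 0) := by omega
        simp [hjb]
    · intro a ha hane
      rw [Finset.mem_range] at ha
      apply Finset.sum_eq_zero
      intro b _
      have hia : ¬ (i - a = 0) := by omega
      simp [hia]
  have S4 : ((∑ a ∈ Finset.range (i+1), ∑ b ∈ Finset.range (j+1),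
      i.choose a * j.choose b * natCount a (b+1) * natCount (i-a+1) (j-b) : ℕ) : ℚ) /
        (i.factorial * j.factorial) =
      ∑ a ∈ Finset.range (i+1), ∑ b ∈ Finset.range (j+1),
        (((natCount a (b+1) : ℚ) / (a.factorial * b.factorial)) *
          ((natCount (i-a+1) (j-b) : ℚ) / ((i-a).factorial * (j-b).factorial))) := by
    push_cast
    rw [Finset.sum_div]
    apply Finset.sum_congr rfl
    intro a ha
    rw [Finset.sum_div]
    apply Finset.sum_congr rfl
    intro b hb
    rw [Finset.mem_range] at ha hb
    rw [Nat.cast_choose ℚ (show a ≤ i by omega), Nat.cast_choose ℚ (show b ≤ j by omega)]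
    have h1 := qfact_ne_zero i
    have h2 := qfact_ne_zero j
    have h3 := qfact_ne_zero a
    have h4 := qfact_ne_zero b
    have h5 := qfact_ne_zero (i-a)
    have h6 := qfact_ne_zero (j-b)
    field_simp
  rw [S1, S2, S3, ← S4]
  have hδ : (Nat.cast (if i = 0 ∧ j = 0 then 1 else 0) : ℚ) / (↑i.factorial * ↑j.factorial) =
      (if i = 0 ∧ j = 0 then (1:ℚ) else 0) := by
    by_cases hij : i = 0 ∧ j = 0
    · rw [if_pos hij, if_pos hij]
      obtain ⟨rfl, rfl⟩ := hij
      norm_num [Nat.factorial]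
    · rw [if_neg hij, if_neg hij]
      simp
  rw [natCount_rec i j]
  rw [Nat.cast_add, Nat.cast_add, Nat.cast_add]
  rw [add_div, add_div, add_div]
  rw [hδ]
  ring

end Series

theorem GFN_eq : GFN = (1 + iX GFN) * (1 + iY GFN) := by
  funext d
  have hmul : ((1 + iX GFN) * (1 + iY GFN)) d =
      ∑ p ∈ Finset.HasAntidiagonal.antidiagonal d, (1 + iX GFN) p.1 * (1 + iY GFN) p.2 := by
    have h0 : ((1 + iX GFN) * (1 + iY GFN)) d =
        MvPowerSeries.coeff d ((1 + iX GFN) * (1 + iY GFN)) := rfl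
    rw [h0, MvPowerSeries.coeff_mul]
    simp only [MvPowerSeries.coeff_apply]
  rw [hmul, sum_antidiagonal_fin2 d (fun x y => (1 + iX GFN) x * (1 + iY GFN) y)]
  have hG : GFN d = (natCount (d 0 + 1) (d 1 + 1) : ℚ) /
      ((d 0).factorial * (d 1).factorial) := rfl
  rw [hG, key_sum (d 0) (d 1)]
  apply Finset.sum_congr rfl
  intro a _
  apply Finset.sum_congr rfl
  intro b _
  rw [one_add_iX_apply, one_add_iY_apply]

lemma inv_succ_mul_div (k : ℕ) (x q : ℚ) :
    ((k:ℚ)+1)⁻¹ * (x / (q * ((k.factorial : ℚ)))) = x / (q * (((k+1).factorial : ℚ))) := by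
  rw [Nat.factorial_succ]
  have h2 := qfact_ne_zero k
  have hk : ((k:ℚ)+1) ≠ 0 := by positivity
  push_cast
  by_cases hq : q = 0
  · simp [hq]
  · field_simp

lemma inv_succ_mul_div' (k : ℕ) (x q : ℚ) :
    ((k:ℚ)+1)⁻¹ * (x / (((k.factorial : ℚ)) * q)) = x / ((((k+1).factorial : ℚ)) * q) := by
  rw [mul_comm ((k.factorial : ℚ)) q, mul_comm (((k+1).factorial : ℚ)) q]
  exact inv_succ_mul_div k x q

lemma dX_scalar (i j : ℕ) :
    ((i:ℚ)+1) * ((if i + 1 = 1 ∧ j = 0 then (1:ℚ) else 0) +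
        (if i + 1 = 0 ∧ j = 1 then (1:ℚ) else 0) +
        (natCount (i+1) j : ℚ) / ((i+1).factorial * j.factorial)) =
    (if i = 0 ∧ j = 0 then (1:ℚ) else 0) +
      (natCount (i+1) j : ℚ) / (i.factorial * j.factorial) := by
  have h2 : (if i + 1 = 0 ∧ j = 1 then (1:ℚ) else 0) = 0 := by
    rw [if_neg]
    rintro ⟨h, -⟩
    omega
  have h1 : (if i + 1 = 1 ∧ j = 0 then (1:ℚ) else 0) = (if i = 0 ∧ j = 0 then (1:ℚ) else 0) := by
    by_cases h : i = 0 ∧ j = 0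
    · rw [if_pos ⟨by omega, h.2⟩, if_pos h]
    · rw [if_neg (fun hc => h ⟨by omega, hc.2⟩), if_neg h]
  rw [h1, h2, add_zero, mul_add]
  congr 1
  · by_cases h : i = 0 ∧ j = 0
    · rw [if_pos h]
      obtain ⟨rfl, -⟩ := h
      norm_num
    · rw [if_neg h]
      ring
  · rw [← inv_succ_mul_div' i ((natCount (i+1) j : ℚ)) ((j.factorial : ℚ))]
    have hk : ((i:ℚ)+1) ≠ 0 := by positivity
    field_simp

lemma dY_scalar (i j : ℕ) :
    ((j:ℚ)+1) * ((if i = 1 ∧ j + 1 = 0 then (1:ℚ) else 0) +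
        (if i = 0 ∧ j + 1 = 1 then (1:ℚ) else 0) +
        (natCount i (j+1) : ℚ) / (i.factorial * (j+1).factorial)) =
    (if i = 0 ∧ j = 0 then (1:ℚ) else 0) +
      (natCount i (j+1) : ℚ) / (i.factorial * j.factorial) := by
  have h2 : (if i = 1 ∧ j + 1 = 0 then (1:ℚ) else 0) = 0 := by
    rw [if_neg]
    rintro ⟨-, h⟩
    omega
  have h1 : (if i = 0 ∧ j + 1 = 1 then (1:ℚ) else 0) = (if i = 0 ∧ j = 0 then (1:ℚ) else 0) := by
    by_cases h : i = 0 ∧ j = 0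
    · rw [if_pos ⟨h.1, by omega⟩, if_pos h]
    · rw [if_neg (fun hc => h ⟨hc.1, by omega⟩), if_neg h]
  rw [h1, h2, zero_add, mul_add]
  congr 1
  · by_cases h : i = 0 ∧ j = 0
    · rw [if_pos h]
      obtain ⟨-, rfl⟩ := h
      norm_num
    · rw [if_neg h]
      ring
  · rw [← inv_succ_mul_div j ((natCount i (j+1) : ℚ)) ((i.factorial : ℚ))]
    have hk : ((j:ℚ)+1) ≠ 0 := by positivity
    field_simp

lemma hdX_eq : dX LGFN = 1 + iY GFN := by
  funext d
  have hL : dX LGFN d = ((d 0 : ℚ) + 1) * LGFN (d + Finsupp.single 0 1) := rfl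
  have e0 : ((d + Finsupp.single 0 1 : Fin 2 →₀ ℕ)) 0 = d 0 + 1 := by simp
  have e1 : ((d + Finsupp.single 0 1 : Fin 2 →₀ ℕ)) 1 = d 1 := by simp
  have hL2 : LGFN (d + Finsupp.single 0 1) =
      (if d 0 + 1 = 1 ∧ d 1 = 0 then (1:ℚ) else 0) +
        (if d 0 + 1 = 0 ∧ d 1 = 1 then (1:ℚ) else 0) +
        (natCount (d 0 + 1) (d 1) : ℚ) / ((d 0 + 1).factorial * (d 1).factorial) := by
    simp only [LGFN, e0, e1]
  have hR : (1 + iY GFN) d = (if d 0 = 0 ∧ d 1 = 0 then (1:ℚ) else 0) +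
      (natCount (d 0 + 1) (d 1) : ℚ) / ((d 0).factorial * (d 1).factorial) := by
    have h1 : (1 + iY GFN) d = (1 : MvPowerSeries (Fin 2) ℚ) d + iY GFN d := rfl
    rw [h1, one_mvps_apply]
    have h2 : iY GFN d = iY GFN (fs (d 0) (d 1)) := by rw [← eq_fs]
    rw [h2, iY_GFN_apply]
  rw [hL, hL2, hR]
  exact dX_scalar (d 0) (d 1)

lemma hdY_eq : dY LGFN = 1 + iX GFN := by
  funext d
  have hL : dY LGFN d = ((d 1 : ℚ) + 1) * LGFN (d + Finsupp.single 1 1) := rfl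
  have e0 : ((d + Finsupp.single 1 1 : Fin 2 →₀ ℕ)) 0 = d 0 := by simp
  have e1 : ((d + Finsupp.single 1 1 : Fin 2 →₀ ℕ)) 1 = d 1 + 1 := by simp
  have hL2 : LGFN (d + Finsupp.single 1 1) =
      (if d 0 = 1 ∧ d 1 + 1 = 0 then (1:ℚ) else 0) +
        (if d 0 = 0 ∧ d 1 + 1 = 1 then (1:ℚ) else 0) +
        (natCount (d 0) (d 1 + 1) : ℚ) / ((d 0).factorial * (d 1 + 1).factorial) := by
    simp only [LGFN, e0, e1]
  have hR : (1 + iX GFN) d = (if d 0 = 0 ∧ d 1 = 0 then (1:ℚ) else 0) +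
      (natCount (d 0) (d 1 + 1) : ℚ) / ((d 0).factorial * (d 1).factorial) := by
    have h1 : (1 + iX GFN) d = (1 : MvPowerSeries (Fin 2) ℚ) d + iX GFN d := rfl
    rw [h1, one_mvps_apply]
    have h2 : iX GFN d = iX GFN (fs (d 0) (d 1)) := by rw [← eq_fs]
    rw [h2, iX_GFN_apply]
  rw [hL, hL2, hR]
  exact dY_scalar (d 0) (d 1)

lemma LGFN_main : LGFN = MvPowerSeries.X 1 + MvPowerSeries.X 0 + iX (iY GFN) := by
  funext d
  have hL : LGFN d = (if d 0 = 1 ∧ d 1 = 0 then (1:ℚ) else 0) +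
      (if d 0 = 0 ∧ d 1 = 1 then (1:ℚ) else 0) +
      (natCount (d 0) (d 1) : ℚ) / ((d 0).factorial * (d 1).factorial) := rfl
  have hsplit : ((MvPowerSeries.X 1 + MvPowerSeries.X 0 + iX (iY GFN) : MvPowerSeries (Fin 2) ℚ)) d =
      (MvPowerSeries.X 1 : MvPowerSeries (Fin 2) ℚ) d +
        (MvPowerSeries.X 0 : MvPowerSeries (Fin 2) ℚ) d + iX (iY GFN) d := rfl
  have hX1 : (MvPowerSeries.X 1 : MvPowerSeries (Fin 2) ℚ) d =
      if d 0 = 0 ∧ d 1 = 1 then 1 else 0 := by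
    have h : (MvPowerSeries.X 1 : MvPowerSeries (Fin 2) ℚ) d =
        MvPowerSeries.coeff d (MvPowerSeries.X 1) := rfl
    rw [h, MvPowerSeries.X_def, MvPowerSeries.coeff_monomial]
    by_cases hc : d 0 = 0 ∧ d 1 = 1
    · rw [if_pos, if_pos hc]
      ext t
      fin_cases t <;> simp [hc.1, hc.2]
    · rw [if_neg, if_neg hc]
      intro h3
      apply hc
      rw [h3]
      constructor <;> simp
  have hX0 : (MvPowerSeries.X 0 : MvPowerSeries (Fin 2) ℚ) d =
      if d 0 = 1 ∧ d 1 = 0 then 1 else 0 := by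
    have h : (MvPowerSeries.X 0 : MvPowerSeries (Fin 2) ℚ) d =
        MvPowerSeries.coeff d (MvPowerSeries.X 0) := rfl
    rw [h, MvPowerSeries.X_def, MvPowerSeries.coeff_monomial]
    by_cases hc : d 0 = 1 ∧ d 1 = 0
    · rw [if_pos, if_pos hc]
      ext t
      fin_cases t <;> simp [hc.1, hc.2]
    · rw [if_neg, if_neg hc]
      intro h3
      apply hc
      rw [h3]
      constructor <;> simp
  have hiXiY : iX (iY GFN) d = (natCount (d 0) (d 1) : ℚ) /
      ((d 0).factorial * (d 1).factorial) := by
    have h1 : iX (iY GFN) d =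
        if d 0 = 0 then 0 else ((d 0 : ℚ))⁻¹ * iY GFN (d - Finsupp.single 0 1) := rfl
    rw [h1]
    rcases Nat.eq_zero_or_pos (d 0) with h0 | h0
    · rw [if_pos h0, h0, natCount_left_zero]
      simp
    · rw [if_neg (by omega)]
      have harg : (d - Finsupp.single 0 1 : Fin 2 →₀ ℕ) = fs (d 0 - 1) (d 1) := by
        ext t
        fin_cases t
        · rw [Finsupp.tsub_apply]; simp
        · rw [Finsupp.tsub_apply]; simp
      rw [harg, iY_GFN_apply]
      obtain ⟨k, hk⟩ : ∃ k, d 0 = k + 1 := ⟨d 0 - 1, by omega⟩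
      rw [hk]
      simp only [Nat.add_sub_cancel]
      push_cast
      exact inv_succ_mul_div' k _ _
  rw [hL, hsplit, hX1, hX0, hiXiY]
  ring

theorem stmt2' :
    LGFN = MvPowerSeries.X 1 + MvPowerSeries.X 0 + iX (iY (dX LGFN * dY LGFN)) ∧
    GFN = (1 + iX GFN) * (1 + iY GFN) := by
  refine ⟨?_, GFN_eq⟩
  have hprod : dX LGFN * dY LGFN = GFN := by
    rw [hdX_eq, hdY_eq, mul_comm]
    exact GFN_eq.symm
  rw [hprod]
  exact LGFN_main

/-- The generating functions of non-ambiguous trees satisfy the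
fixed-point differential equations
`LGFN = y + x + ∫ₓ∫_y ∂ₓLGFN · ∂_yLGFN` and
`GFN = (1 + ∫ₓ GFN)(1 + ∫_y GFN)`. -/
theorem stmt2 :
    LGFN = MvPowerSeries.X 1 + MvPowerSeries.X 0 + iX (iY (dX LGFN * dY LGFN)) ∧
    GFN = (1 + iX GFN) * (1 + iY GFN) := by
  exact stmt2'
end
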